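/- arXiv:2407.13114 — 4 statements merged into one kernel-verified Lean document; each statement's English description precedes it below -/
import Mathlib

section
/- There exists a constant K₁ > 0 and a threshold N₀ ∈ ℕ such that for all N ≥ N₀, the discrepancy of the Champernowne constant satisfies D(c, N) < K₁ / log N. -/
open scoped Classical

/-- The `i`-th decimal digit (for `i ≥ 1`) of a real number `α`, using the floor
convention, which for numbers admitting two decimal expansions selects the
expansion ending in a tail of `0`s. -/
noncomputable def digit (α : ℝ) (i : ℕ) : ℕ := (⌊α * 10 ^ i⌋ % 10).toNat

/-- Number of occurrences of the digit block `B` (of length `k`) as consecutive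
digits among the first `N` decimal digits of `α`:
`occ α B N = #{i : 1 ≤ i ≤ N - k + 1 ∧ (α_i, …, α_{i+k-1}) = B}`. -/
noncomputable def occ {k : ℕ} (α : ℝ) (B : Fin k → Fin 10) (N : ℕ) : ℕ :=
  ((Finset.Icc 1 N).filter fun i =>
    i + k ≤ N + 1 ∧ ∀ j : Fin k, digit α (i + (j : ℕ)) = (B j : ℕ)).card

/-- Discrepancy of the first `N` terms of a sequence `(x_n)_{n ≥ 1}` of points of `[0,1)`:
the supremum over `0 ≤ a < b < 1` of `|#{n ≤ N : x n ∈ [a,b)}/N - (b - a)|`. -/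
noncomputable def discSeq (x : ℕ → ℝ) (N : ℕ) : ℝ :=
  sSup {d : ℝ | ∃ a b : ℝ, 0 ≤ a ∧ a < b ∧ b < 1 ∧
    d = |(((Finset.Icc 1 N).filter fun n => x n ∈ Set.Ico a b).card : ℝ) / N - (b - a)|}

/-- Discrepancy of a real number for base 10: the discrepancy of the sequence
`(10^(n-1) α mod 1)_{n ≥ 1}`. -/
noncomputable def D (α : ℝ) (N : ℕ) : ℝ :=
  discSeq (fun n => Int.fract (10 ^ (n - 1) * α)) N

/-- `T v` is the total number of digits in the concatenation of the decimal
representations of `1, 2, …, v`. -/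
def T (v : ℕ) : ℕ := ∑ j ∈ Finset.Icc 1 v, (Nat.digits 10 j).length

/-- The Champernowne constant `c = 0.123456789101112…`, the concatenation of the
positive integers in base 10: the term `m` ends at decimal position `T m`. -/
noncomputable def champ : ℝ := ∑' m : ℕ, (m : ℝ) / 10 ^ T m

/-- `vOf N` is the least `v` with `T v ≥ N` (the term of the concatenation
containing the `N`-th digit). -/
noncomputable def vOf (N : ℕ) : ℕ := sInf {v | N ≤ T v}

/-- `nOf N` is the number of decimal digits of `vOf N`. -/
noncomputable def nOf (N : ℕ) : ℕ := (Nat.digits 10 (vOf N)).length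

/-- Number of non-overlapping occurrences of the block `B` (length `k`) in the string
`s_ℓ` (the concatenation of all `ℓ`-digit integers in increasing order): the number of
pairs `(y, j)` with `10^(ℓ-1) ≤ y < 10^ℓ`, `1 ≤ j ≤ ℓ - k + 1`, such that the digits of
`y` in positions `j, …, j + k - 1` (counted from the left) equal `B`. -/
def occNoSeg {k : ℕ} (B : Fin k → Fin 10) (ℓ : ℕ) : ℕ :=
  ((Finset.Ico (10 ^ (ℓ - 1)) (10 ^ ℓ) ×ˢ Finset.Icc 1 (ℓ - k + 1)).filter fun p =>
    ∀ i : Fin k, p.1 / 10 ^ (ℓ - (p.2 + (i : ℕ))) % 10 = (B i : ℕ)).card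

/-- Number of occurrences of the block `B` (length `k ≤ ℓ`) in the string `s_ℓ` that
straddle the boundary between two consecutive `ℓ`-digit terms `y` and `y + 1`:
the number of pairs `(y, j)` with `10^(ℓ-1) ≤ y < 10^ℓ - 1` and `1 ≤ j ≤ k - 1` such
that the last `j` digits of `y` are `(b₁, …, b_j)` and the first `k - j` digits of
`y + 1` are `(b_{j+1}, …, b_k)`. -/
def occOSeg {k : ℕ} (B : Fin k → Fin 10) (ℓ : ℕ) : ℕ :=
  ((Finset.Ico (10 ^ (ℓ - 1)) (10 ^ ℓ - 1) ×ˢ Finset.Ico 1 k).filter fun p =>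
    (∀ i : Fin k, (i : ℕ) < p.2 → p.1 / 10 ^ (p.2 - 1 - (i : ℕ)) % 10 = (B i : ℕ)) ∧
    (∀ i : Fin k, p.2 ≤ (i : ℕ) →
      (p.1 + 1) / 10 ^ (ℓ - 1 - ((i : ℕ) - p.2)) % 10 = (B i : ℕ))).card

def dlen (n : ℕ) : ℕ := (Nat.digits 10 n).length

lemma dlen_pos {n : ℕ} (h : 1 ≤ n) : 1 ≤ dlen n :=
  List.length_pos_iff.mpr (Nat.digits_ne_nil_iff_ne_zero.mpr (by omega))

lemma lt_pow_dlen (n : ℕ) : n < 10 ^ dlen n :=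
  Nat.lt_base_pow_length_digits (by norm_num)

lemma pow_dlen_le {n : ℕ} (h : 1 ≤ n) : 10 ^ (dlen n - 1) ≤ n := by
  have h2 : 10 ^ dlen n ≤ 10 * n := Nat.base_pow_length_digits_le 10 n (by norm_num) (by omega)
  have h1 := dlen_pos h
  have h3 : 10 ^ dlen n = 10 * 10 ^ (dlen n - 1) := by
    rw [← pow_succ']; congr 1; omega
  omega

lemma dlen_mono : Monotone dlen := fun a b h => Nat.le_digits_len_le 10 a b h

lemma dlen_le_iff {n k : ℕ} : dlen n ≤ k ↔ n < 10 ^ k := by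
  constructor
  · intro h
    exact lt_of_lt_of_le (lt_pow_dlen n) (Nat.pow_le_pow_right (by norm_num) h)
  · intro h
    by_contra hc
    push_neg at hc
    rcases Nat.eq_zero_or_pos n with h0 | h0
    · simp [dlen, h0] at hc
    · have h4 := pow_dlen_le h0
      have : 10 ^ k ≤ 10 ^ (dlen n - 1) := Nat.pow_le_pow_right (by norm_num) (by omega)
      omega

lemma dlen_eq_iff {n ℓ : ℕ} (h : 1 ≤ ℓ) : dlen n = ℓ ↔ 10 ^ (ℓ - 1) ≤ n ∧ n < 10 ^ ℓ := by
  constructor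
  · intro he
    refine ⟨?_, he ▸ lt_pow_dlen n⟩
    rcases Nat.eq_zero_or_pos n with h0 | h0
    · simp [dlen, h0] at he; omega
    · exact he ▸ pow_dlen_le h0
  · rintro ⟨h1, h2⟩
    have hu : dlen n ≤ ℓ := dlen_le_iff.mpr h2
    have hl : ¬ dlen n ≤ ℓ - 1 := by
      rw [dlen_le_iff]; intro hc; omega
    omega

lemma T_def (v : ℕ) : T v = ∑ j ∈ Finset.Icc 1 v, dlen j := rfl

lemma T_zero : T 0 = 0 := by simp [T]

lemma T_succ (v : ℕ) : T (v + 1) = T v + dlen (v + 1) :=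
  Finset.sum_Icc_succ_top (by omega) _

lemma T_pred {y : ℕ} (h : 1 ≤ y) : T y = T (y - 1) + dlen y := by
  obtain ⟨v, rfl⟩ : ∃ v, y = v + 1 := ⟨y - 1, by omega⟩
  simpa using T_succ v

lemma T_mono : Monotone T := by
  intro x y h
  exact Finset.sum_le_sum_of_subset (Finset.Icc_subset_Icc_right h)

lemma self_le_T (v : ℕ) : v ≤ T v := by
  induction v with
  | zero => simp [T_zero]
  | succ n ih =>
    have := dlen_pos (n := n + 1) (by omega)
    rw [T_succ]; omega

lemma T_le (v : ℕ) : T v ≤ v * dlen v := by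
  calc T v ≤ ∑ _j ∈ Finset.Icc 1 v, dlen v :=
        Finset.sum_le_sum fun j hj => dlen_mono (Finset.mem_Icc.mp hj).2
    _ = v * dlen v := by simp [Nat.card_Icc]

lemma T_add_ge (v n : ℕ) : T v + n ≤ T (v + n) := by
  induction n with
  | zero => simp
  | succ n ih =>
    have h1 := dlen_pos (n := v + n + 1) (by omega)
    have h2 := T_succ (v + n)
    have h3 : v + (n + 1) = v + n + 1 := by omega
    rw [h3]
    omega

def Z (v : ℕ) : ℕ := ∑ m ∈ Finset.Icc 1 v, m * 10 ^ (T v - T m)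

noncomputable def tl (v : ℕ) : ℝ :=
  ∑' i : ℕ, ((v + i + 1 : ℕ) : ℝ) * 10 ^ T v / 10 ^ T (v + i + 1)

lemma champ_term_le (m : ℕ) : (m : ℝ) / 10 ^ T m ≤ 10 / 10 ^ m := by
  rcases Nat.eq_zero_or_pos m with rfl | hm
  · norm_num
  rw [div_le_div_iff₀ (by positivity) (by positivity)]
  have h1 : (m : ℝ) ≤ 10 ^ dlen m := by
    exact_mod_cast (lt_pow_dlen m).le
  have h2 : dlen m + m ≤ 1 + T m := by
    have h3 := T_succ (m - 1)
    have h5 : m - 1 + 1 = m := by omega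
    rw [h5] at h3
    have h4 := self_le_T (m - 1)
    omega
  calc (m : ℝ) * 10 ^ m ≤ 10 ^ dlen m * 10 ^ m := by
        apply mul_le_mul_of_nonneg_right h1 (by positivity)
    _ = 10 ^ (dlen m + m) := by rw [pow_add]
    _ ≤ 10 ^ (1 + T m) := by
        apply pow_le_pow_right₀ (by norm_num) h2
    _ = 10 * 10 ^ T m := by rw [pow_add]; norm_num

lemma summable_aux : Summable (fun m : ℕ => (10 : ℝ) / 10 ^ m) := by
  have : (fun m : ℕ => (10 : ℝ) / 10 ^ m) = fun m : ℕ => 10 * (1 / 10 : ℝ) ^ m := by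
    funext m; rw [one_div, inv_pow, div_eq_mul_inv]
  rw [this]
  exact (summable_geometric_of_lt_one (by norm_num) (by norm_num)).mul_left 10

lemma summable_champ : Summable (fun m : ℕ => (m : ℝ) / 10 ^ T m) :=
  Summable.of_nonneg_of_le (fun m => by positivity) champ_term_le summable_aux

lemma summable_g (v : ℕ) : Summable (fun m : ℕ => (m : ℝ) * 10 ^ T v / 10 ^ T m) := by
  have : (fun m : ℕ => (m : ℝ) * 10 ^ T v / 10 ^ T m)
      = fun m : ℕ => ((m : ℝ) / 10 ^ T m) * 10 ^ T v := by
    funext m; ring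
  rw [this]
  exact summable_champ.mul_right _

lemma champ_split (v : ℕ) : (10 : ℝ) ^ T v * champ = (Z v : ℝ) + tl v := by
  have h1 : (10 : ℝ) ^ T v * champ = ∑' m : ℕ, (m : ℝ) * 10 ^ T v / 10 ^ T m := by
    rw [champ, ← tsum_mul_left]
    congr 1; funext m; ring
  have h2 := Summable.sum_add_tsum_nat_add (f := fun m : ℕ => (m : ℝ) * 10 ^ T v / 10 ^ T m)
    (v + 1) (summable_g v)
  have h3 : (∑' i : ℕ, ((i + (v + 1) : ℕ) : ℝ) * 10 ^ T v / 10 ^ T (i + (v + 1))) = tl v := by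
    rw [tl]
    congr 1; funext i
    have : i + (v + 1) = v + i + 1 := by omega
    rw [this]
  have h4 : (∑ i ∈ Finset.range (v + 1), ((i : ℝ)) * 10 ^ T v / 10 ^ T i) = (Z v : ℝ) := by
    have hr : Finset.range (v + 1) = insert 0 (Finset.Icc 1 v) := by
      ext x; simp [Finset.mem_range, Finset.mem_Icc]; omega
    rw [hr, Finset.sum_insert (by simp)]
    simp only [Nat.cast_zero, zero_mul, zero_div, zero_add]
    rw [Z, Nat.cast_sum]
    apply Finset.sum_congr rfl
    intro m hm
    have hmv : T m ≤ T v := T_mono (Finset.mem_Icc.mp hm).2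
    push_cast
    rw [pow_sub₀ (10 : ℝ) (by norm_num) hmv]
    ring
  rw [h1, ← h2, h3, h4]

lemma tl_nonneg (v : ℕ) : 0 ≤ tl v :=
  tsum_nonneg fun i => by positivity

-- telescoping difference
noncomputable def G (v i : ℕ) : ℝ := 10 ^ T v / 10 ^ T (v + i)

lemma G_zero (v : ℕ) : G v 0 = 1 := by simp [G]

lemma G_le (v i : ℕ) : G v i ≤ (1 / 10 : ℝ) ^ i := by
  rw [G, div_le_iff₀ (by positivity), one_div, inv_pow, ← div_eq_inv_mul,
    le_div_iff₀ (by positivity), ← pow_add]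
  apply pow_le_pow_right₀ (by norm_num)
  exact T_add_ge v i

lemma G_nonneg (v i : ℕ) : 0 ≤ G v i := by rw [G]; positivity

lemma G_succ (v i : ℕ) : G v i = 10 ^ dlen (v + i + 1) * G v (i + 1) := by
  rw [G, G]
  have h : T (v + (i + 1)) = T (v + i) + dlen (v + i + 1) := by
    have := T_succ (v + i)
    rw [show v + (i + 1) = v + i + 1 by omega, this]
  rw [h, pow_add]
  field_simp

lemma hasSum_G (v : ℕ) : HasSum (fun i => G v i - G v (i + 1)) 1 := by
  have hnn : ∀ i, 0 ≤ G v i - G v (i + 1) := by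
    intro i
    have : G v (i + 1) ≤ G v i := by
      rw [G, G]
      apply div_le_div_of_nonneg_left (by positivity) (by positivity)
      apply pow_le_pow_right₀ (by norm_num)
      exact T_mono (by omega)
    linarith
  rw [hasSum_iff_tendsto_nat_of_nonneg hnn]
  have hts : ∀ n, ∑ i ∈ Finset.range n, (G v i - G v (i + 1)) = 1 - G v n := by
    intro n; rw [Finset.sum_range_sub' (G v) n, G_zero]
  simp only [hts]
  have : Filter.Tendsto (fun n => G v n) Filter.atTop (nhds 0) := by
    apply squeeze_zero (fun i => G_nonneg v i) (fun i => G_le v i)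
    exact tendsto_pow_atTop_nhds_zero_of_lt_one (by norm_num : (0:ℝ) ≤ 1/10) (by norm_num)
  simpa using (tendsto_const_nhds (x := (1:ℝ))).sub this

lemma term_le (v i : ℕ) :
    ((v + i + 1 : ℕ) : ℝ) * 10 ^ T v / 10 ^ T (v + i + 1) ≤ G v i - G v (i + 1) := by
  have h1 : G v i - G v (i + 1) = ((10 : ℝ) ^ dlen (v + i + 1) - 1) * G v (i + 1) := by
    rw [G_succ v i]; ring
  rw [h1]
  have h2 : G v (i + 1) = 10 ^ T v / 10 ^ T (v + i + 1) := by
    rw [G, show v + (i + 1) = v + i + 1 by omega]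
  rw [h2, mul_div_assoc]
  apply mul_le_mul_of_nonneg_right _ (by positivity)
  have hn : v + i + 1 + 1 ≤ 10 ^ dlen (v + i + 1) := lt_pow_dlen (v + i + 1)
  have hr : ((v + i + 1 : ℕ) : ℝ) + 1 ≤ 10 ^ dlen (v + i + 1) := by exact_mod_cast hn
  linarith

lemma summable_tl (v : ℕ) :
    Summable (fun i : ℕ => ((v + i + 1 : ℕ) : ℝ) * 10 ^ T v / 10 ^ T (v + i + 1)) :=
  Summable.of_nonneg_of_le (fun i => by positivity) (term_le v) (hasSum_G v).summable

lemma exists_strict (v : ℕ) : ∃ i : ℕ,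
    ((v + i + 1 : ℕ) : ℝ) * 10 ^ T v / 10 ^ T (v + i + 1) < G v i - G v (i + 1) := by
  have key : ∀ i : ℕ, v + i + 1 + 1 < 10 ^ dlen (v + i + 1) →
      ((v + i + 1 : ℕ) : ℝ) * 10 ^ T v / 10 ^ T (v + i + 1) < G v i - G v (i + 1) := by
    intro i hi
    have h1 : G v i - G v (i + 1) = ((10 : ℝ) ^ dlen (v + i + 1) - 1) * G v (i + 1) := by
      rw [G_succ v i]; ring
    have h2 : G v (i + 1) = 10 ^ T v / 10 ^ T (v + i + 1) := by
      rw [G, show v + (i + 1) = v + i + 1 by omega]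
    rw [h1, h2, mul_div_assoc]
    apply mul_lt_mul_of_pos_right _ (by positivity)
    have : ((v + i + 1 : ℕ) : ℝ) + 1 < 10 ^ dlen (v + i + 1) := by exact_mod_cast hi
    linarith
  rcases lt_or_ge (v + 1 + 1) (10 ^ dlen (v + 1)) with h | h
  · exact ⟨0, key 0 h⟩
  · -- v + 1 = 10 ^ dlen (v+1) - 1, so v + 2 = 10 ^ d, with dlen (v+2) = d + 1
    have hlt := lt_pow_dlen (v + 1)
    have heq : v + 2 = 10 ^ dlen (v + 1) := by omega
    refine ⟨1, key 1 ?_⟩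
    have h2 : dlen (v + 1 + 1) = dlen (v + 1) + 1 := by
      rw [show v + 1 + 1 = v + 2 by omega, heq, dlen, Nat.digits_len 10 _ (by norm_num) (by positivity), Nat.log_pow (by norm_num)]
    rw [show v + 1 + 1 = v + 2 by omega] at h2 ⊢
    rw [h2, heq]
    have hp : 1 ≤ 10 ^ dlen (v + 1) := Nat.one_le_pow _ _ (by norm_num)
    calc 10 ^ dlen (v + 1) + 1 < 10 ^ dlen (v + 1) * 10 := by omega
      _ = 10 ^ (dlen (v + 1) + 1) := by rw [pow_succ]
    
lemma tl_lt_one (v : ℕ) : tl v < 1 := by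
  obtain ⟨i₀, hi₀⟩ := exists_strict v
  have := Summable.tsum_lt_tsum (f := fun i : ℕ => ((v + i + 1 : ℕ) : ℝ) * 10 ^ T v / 10 ^ T (v + i + 1))
    (g := fun i => G v i - G v (i + 1)) (i := i₀) (term_le v) hi₀ (summable_tl v) (hasSum_G v).summable
  rw [tl]
  calc ∑' i : ℕ, ((v + i + 1 : ℕ) : ℝ) * 10 ^ T v / 10 ^ T (v + i + 1)
      < ∑' i : ℕ, (G v i - G v (i + 1)) := this
    _ = 1 := (hasSum_G v).tsum_eq

lemma Z_succ {y : ℕ} (h : 1 ≤ y) : Z y = 10 ^ dlen y * Z (y - 1) + y := by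
  obtain ⟨w, rfl⟩ : ∃ w, y = w + 1 := ⟨y - 1, by omega⟩
  simp only [Nat.add_sub_cancel]
  rw [Z, Finset.sum_Icc_succ_top (by omega), Z, Finset.mul_sum]
  have h0 : T (w + 1) - T (w + 1) = 0 := by omega
  rw [h0, pow_zero, mul_one]
  congr 1
  apply Finset.sum_congr rfl
  intro m hm
  have hm' : m ≤ w := (Finset.mem_Icc.mp hm).2
  have h1 : T m ≤ T w := T_mono hm'
  have h2 : T (w + 1) = T w + dlen (w + 1) := T_succ w
  have h3 : T (w + 1) - T m = dlen (w + 1) + (T w - T m) := by omega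
  rw [h3, pow_add]
  ring

lemma fract_eq {y j : ℕ} (hy : 1 ≤ y) (hj1 : 1 ≤ j) (hj2 : j ≤ dlen y) :
    Int.fract ((10 : ℝ) ^ (T (y - 1) + j - 1) * champ)
      = (((y % 10 ^ (dlen y + 1 - j) : ℕ) : ℝ) + tl y) / 10 ^ (dlen y + 1 - j) := by
  set ℓ := dlen y with hℓ
  set m := ℓ + 1 - j with hm
  have hmℓ : j - 1 + m = ℓ := by omega
  have he : T (y - 1) + j - 1 = (j - 1) + T (y - 1) := by omega
  have h1 : (10 : ℝ) ^ (T (y - 1) + j - 1) * champ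
      = 10 ^ (j - 1) * ((Z (y - 1) : ℝ) + tl (y - 1)) := by
    rw [he, pow_add, mul_assoc, champ_split (y - 1)]
  have h2 : tl (y - 1) = ((y : ℝ) + tl y) / 10 ^ ℓ := by
    have ha := champ_split (y - 1)
    have hb := champ_split y
    have hT : T y = T (y - 1) + ℓ := T_pred hy
    have hZ : (Z y : ℝ) = 10 ^ ℓ * (Z (y - 1) : ℝ) + (y : ℝ) := by
      have := Z_succ hy
      exact_mod_cast congrArg (fun n : ℕ => (n : ℝ)) this
    have hc : (10 : ℝ) ^ T y * champ = 10 ^ ℓ * (10 ^ T (y - 1) * champ) := by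
      rw [hT, pow_add]; ring
    rw [ha, hb, hZ] at hc
    have hpow : (0:ℝ) < 10 ^ ℓ := by positivity
    field_simp
    linarith [hc]
  rw [h1, h2]
  have h3 : (10 : ℝ) ^ (j - 1) * ((Z (y - 1) : ℝ) + ((y : ℝ) + tl y) / 10 ^ ℓ)
      = ((10 ^ (j - 1) * Z (y - 1) : ℕ) : ℝ) + ((y : ℝ) + tl y) / 10 ^ m := by
    push_cast
    rw [← hmℓ, pow_add]
    have : (0:ℝ) < 10 ^ m := by positivity
    field_simp
  rw [h3, Int.fract_natCast_add]
  have hdm : y = 10 ^ m * (y / 10 ^ m) + y % 10 ^ m := (Nat.div_add_mod y (10 ^ m)).symm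
  have h4 : ((y : ℝ) + tl y) / 10 ^ m
      = ((y / 10 ^ m : ℕ) : ℝ) + (((y % 10 ^ m : ℕ) : ℝ) + tl y) / 10 ^ m := by
    nth_rewrite 1 [hdm]
    push_cast
    have : (0:ℝ) < 10 ^ m := by positivity
    field_simp
    ring
  rw [h4, Int.fract_natCast_add, Int.fract_eq_self.mpr]
  constructor
  · have := tl_nonneg y
    positivity
  · have h5 : y % 10 ^ m < 10 ^ m := Nat.mod_lt _ (by positivity)
    have h6 : ((y % 10 ^ m : ℕ) : ℝ) ≤ 10 ^ m - 1 := by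
      have : y % 10 ^ m + 1 ≤ 10 ^ m := h5
      have := (Nat.cast_le (α := ℝ)).mpr this
      push_cast at this
      linarith
    have h7 := tl_lt_one y
    rw [div_lt_one (by positivity)]
    linarith

lemma count_mod_range (M u v : ℕ) (hM : 1 ≤ M) (hv : v ≤ M) (Y : ℕ) :
    ((Finset.range Y).filter fun y => y % M ∈ Finset.Ico u v).card
      = Y / M * (v - u) + (min v (Y % M) - u) := by
  induction Y with
  | zero => simp
  | succ Y ih =>
    rw [Finset.range_add_one, Finset.filter_insert]
    have hYM : Y % M < M := Nat.mod_lt _ hM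
    have hdm := Nat.div_add_mod Y M
    have hqw : (Y / M + 1) * (v - u) = Y / M * (v - u) + (v - u) := by ring
    by_cases hc : Y % M + 1 = M
    · have h1 : Y + 1 = M * (Y / M) + M := by omega
      have hd : (Y + 1) / M = Y / M + 1 := by
        rw [h1, Nat.mul_add_div (by omega), Nat.div_self (by omega)]
      have hm2 : (Y + 1) % M = 0 := by
        rw [h1, Nat.mul_add_mod, Nat.mod_self]
      by_cases hmem : Y % M ∈ Finset.Ico u v
      · rw [if_pos hmem, Finset.card_insert_of_notMem (by simp), ih, hd, hm2]
        simp only [Finset.mem_Ico] at hmem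
        rcases le_total v (Y % M) with h1 | h1 <;>
          simp only [min_eq_left, min_eq_right, h1, Nat.min_zero, Nat.zero_min] <;> omega
      · rw [if_neg hmem, ih, hd, hm2]
        simp only [Finset.mem_Ico, not_and, not_lt] at hmem
        rcases le_total v (Y % M) with h1 | h1 <;>
          simp only [min_eq_left, min_eq_right, h1, Nat.min_zero, Nat.zero_min] <;> omega
    · have hd : (Y + 1) / M = Y / M := by
        have h1 : Y + 1 = (Y % M + 1) + M * (Y / M) := by omega
        rw [h1, Nat.add_mul_div_left _ _ (by omega), Nat.div_eq_of_lt (by omega)]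
        omega
      have hm2 : (Y + 1) % M = Y % M + 1 := by
        have h1 : Y + 1 = (Y % M + 1) + M * (Y / M) := by omega
        rw [h1, Nat.add_mul_mod_self_left, Nat.mod_eq_of_lt (by omega)]
      by_cases hmem : Y % M ∈ Finset.Ico u v
      · rw [if_pos hmem, Finset.card_insert_of_notMem (by simp), ih, hd, hm2]
        simp only [Finset.mem_Ico] at hmem
        rcases le_total v (Y % M) with h1 | h1 <;>
          rcases le_total v (Y % M + 1) with h2 | h2 <;>
          simp only [min_eq_left, min_eq_right, h1, h2] <;> omega
      · rw [if_neg hmem, ih, hd, hm2]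
        simp only [Finset.mem_Ico, not_and, not_lt] at hmem
        rcases le_total v (Y % M) with h1 | h1 <;>
          rcases le_total v (Y % M + 1) with h2 | h2 <;>
          simp only [min_eq_left, min_eq_right, h1, h2] <;> omega

lemma count_mod_Ico (M u v : ℕ) (hM : 1 ≤ M) (hv : v ≤ M) {Y₀ Y₁ : ℕ} (hY : Y₀ ≤ Y₁) :
    ((Finset.Ico Y₀ Y₁).filter fun y => y % M ∈ Finset.Ico u v).card
      + (Y₀ / M * (v - u) + (min v (Y₀ % M) - u))
      = Y₁ / M * (v - u) + (min v (Y₁ % M) - u) := by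
  have hsplit : Finset.range Y₀ ∪ Finset.Ico Y₀ Y₁ = Finset.range Y₁ := by
    simp only [Finset.range_eq_Ico]
    exact Finset.Ico_union_Ico_eq_Ico (by omega) hY
  have hdisj : Disjoint (Finset.range Y₀) (Finset.Ico Y₀ Y₁) := by
    simp only [Finset.range_eq_Ico]
    exact Finset.Ico_disjoint_Ico_consecutive 0 Y₀ Y₁
  have h2 := count_mod_range M u v hM hv Y₁
  rw [← hsplit, Finset.filter_union, Finset.card_union_of_disjoint
    (Finset.disjoint_filter_filter hdisj)] at h2
  rw [count_mod_range M u v hM hv Y₀] at h2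
  omega

lemma count_mod_bounds (M u v : ℕ) (hM : 1 ≤ M) (hv : v ≤ M) {Y₀ Y₁ : ℕ} (hY : Y₀ ≤ Y₁) :
    |(((Finset.Ico Y₀ Y₁).filter fun y => y % M ∈ Finset.Ico u v).card : ℝ)
      - ((Y₁ - Y₀ : ℕ) : ℝ) * ((v - u : ℕ) : ℝ) / M| ≤ 2 * ((v - u : ℕ) : ℝ) := by
  have key := count_mod_Ico M u v hM hv hY
  set C := ((Finset.Ico Y₀ Y₁).filter fun y => y % M ∈ Finset.Ico u v).card with hC
  have hs₀w : min v (Y₀ % M) - u ≤ v - u := by omega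
  have hs₁w : min v (Y₁ % M) - u ≤ v - u := by omega
  have keyR : (C : ℝ) + (((Y₀ / M : ℕ) : ℝ) * ((v - u : ℕ) : ℝ) + ((min v (Y₀ % M) - u : ℕ) : ℝ))
      = ((Y₁ / M : ℕ) : ℝ) * ((v - u : ℕ) : ℝ) + ((min v (Y₁ % M) - u : ℕ) : ℝ) := by
    exact_mod_cast key
  have hMR : (0:ℝ) < M := by exact_mod_cast hM
  have c0 : (M:ℝ) * ((Y₀ / M : ℕ) : ℝ) + ((Y₀ % M : ℕ) : ℝ) = (Y₀ : ℝ) := by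
    exact_mod_cast Nat.div_add_mod Y₀ M
  have c1 : (M:ℝ) * ((Y₁ / M : ℕ) : ℝ) + ((Y₁ % M : ℕ) : ℝ) = (Y₁ : ℝ) := by
    exact_mod_cast Nat.div_add_mod Y₁ M
  have hRR : ((Y₁ - Y₀ : ℕ) : ℝ) = (Y₁ : ℝ) - (Y₀ : ℝ) := by
    rw [Nat.cast_sub hY]
  have hCe : (C : ℝ) - ((Y₁ - Y₀ : ℕ) : ℝ) * ((v - u : ℕ) : ℝ) / M
      = ((v - u : ℕ) : ℝ) * (((Y₁ / M : ℕ) : ℝ) - ((Y₀ / M : ℕ) : ℝ) - ((Y₁ - Y₀ : ℕ) : ℝ) / M)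
        + (((min v (Y₁ % M) - u : ℕ) : ℝ) - ((min v (Y₀ % M) - u : ℕ) : ℝ)) := by
    linear_combination keyR
  rw [hCe]
  have hdiff : |((Y₁ / M : ℕ) : ℝ) - ((Y₀ / M : ℕ) : ℝ) - ((Y₁ - Y₀ : ℕ) : ℝ) / M| ≤ 1 := by
    have heq : ((Y₁ / M : ℕ) : ℝ) - ((Y₀ / M : ℕ) : ℝ) - ((Y₁ - Y₀ : ℕ) : ℝ) / M
        = (((Y₀ % M : ℕ) : ℝ) - ((Y₁ % M : ℕ) : ℝ)) / M := by
      rw [hRR]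
      field_simp
      linarith [c0, c1]
    rw [heq, abs_div, abs_of_pos hMR, div_le_one hMR]
    have b0 : ((Y₀ % M : ℕ) : ℝ) < M := by exact_mod_cast Nat.mod_lt _ hM
    have b1 : ((Y₁ % M : ℕ) : ℝ) < M := by exact_mod_cast Nat.mod_lt _ hM
    have b0' : (0:ℝ) ≤ ((Y₀ % M : ℕ) : ℝ) := by positivity
    have b1' : (0:ℝ) ≤ ((Y₁ % M : ℕ) : ℝ) := by positivity
    rw [abs_le]; constructor <;> linarith
  have habs2 : |((min v (Y₁ % M) - u : ℕ) : ℝ) - ((min v (Y₀ % M) - u : ℕ) : ℝ)|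
      ≤ ((v - u : ℕ) : ℝ) := by
    have e0 : ((min v (Y₀ % M) - u : ℕ) : ℝ) ≤ ((v - u : ℕ) : ℝ) := by exact_mod_cast hs₀w
    have e1 : ((min v (Y₁ % M) - u : ℕ) : ℝ) ≤ ((v - u : ℕ) : ℝ) := by exact_mod_cast hs₁w
    have e2 : (0:ℝ) ≤ ((min v (Y₀ % M) - u : ℕ) : ℝ) := by positivity
    have e3 : (0:ℝ) ≤ ((min v (Y₁ % M) - u : ℕ) : ℝ) := by positivity
    rw [abs_le]; constructor <;> linarith
  calc |((v - u : ℕ) : ℝ) * (((Y₁ / M : ℕ) : ℝ) - ((Y₀ / M : ℕ) : ℝ) - ((Y₁ - Y₀ : ℕ) : ℝ) / M)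
        + (((min v (Y₁ % M) - u : ℕ) : ℝ) - ((min v (Y₀ % M) - u : ℕ) : ℝ))|
      ≤ |((v - u : ℕ) : ℝ)| * |(((Y₁ / M : ℕ) : ℝ) - ((Y₀ / M : ℕ) : ℝ) - ((Y₁ - Y₀ : ℕ) : ℝ) / M)|
        + |(((min v (Y₁ % M) - u : ℕ) : ℝ) - ((min v (Y₀ % M) - u : ℕ) : ℝ))| := by
        rw [← abs_mul]; exact abs_add_le _ _
    _ ≤ ((v - u : ℕ) : ℝ) * 1 + ((v - u : ℕ) : ℝ) := by
        apply add_le_add _ habs2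
        rw [abs_of_nonneg (by positivity)]
        exact mul_le_mul_of_nonneg_left hdiff (by positivity)
    _ = 2 * ((v - u : ℕ) : ℝ) := by ring

lemma cast_sub_ge (p q : ℕ) : (p : ℝ) - (q : ℝ) ≤ ((p - q : ℕ) : ℝ) := by
  rcases le_total q p with h | h
  · rw [Nat.cast_sub h]
  · have h0 : p - q = 0 := by omega
    have h1 : (p:ℝ) ≤ q := by exact_mod_cast h
    rw [h0]; simp; linarith


set_option maxHeartbeats 1000000 in
lemma count_cond_bounds {a b : ℝ} (ha : 0 ≤ a) (hab : a < b) (hb : b ≤ 1)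
    (M : ℕ) (hM : 1 ≤ M) (t : ℕ → ℝ) (ht0 : ∀ y, 0 ≤ t y) (ht1 : ∀ y, t y < 1)
    {Y₀ Y₁ : ℕ} (hY : Y₀ ≤ Y₁) :
    |(((Finset.Ico Y₀ Y₁).filter fun y =>
        (((y % M : ℕ) : ℝ) + t y) / M ∈ Set.Ico a b).card : ℝ)
      - (b - a) * ((Y₁ - Y₀ : ℕ) : ℝ)|
      ≤ 2 * ((Y₁ - Y₀ : ℕ) : ℝ) / M + 2 * (b - a) * M + 4 := by
  have hMR : (0:ℝ) < M := by exact_mod_cast hM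
  set u₁ := ⌈a * M⌉₊ with hu₁
  set v₁ := ⌊b * M⌋₊ with hv₁
  set u₂ := ⌊a * M⌋₊ with hu₂
  set v₂ := min ⌈b * M⌉₊ M with hv₂
  have hbM : 0 ≤ b * M := by nlinarith
  have haM : 0 ≤ a * M := by positivity
  have hv₁M : v₁ ≤ M := by
    have h1 : (⌊b * M⌋₊ : ℝ) ≤ b * M := Nat.floor_le hbM
    have h2 : b * M ≤ M := by nlinarith
    have h3 : (⌊b * M⌋₊ : ℝ) ≤ (M:ℝ) := by linarith
    exact_mod_cast h3
  have hv₂M : v₂ ≤ M := min_le_right _ _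
  have hcard₁ : ((Finset.Ico Y₀ Y₁).filter (fun y => y % M ∈ Finset.Ico u₁ v₁)).card
      ≤ ((Finset.Ico Y₀ Y₁).filter (fun y =>
        (((y % M : ℕ) : ℝ) + t y) / M ∈ Set.Ico a b)).card := by
    apply Finset.card_le_card
    apply Finset.monotone_filter_right
    intro y _ hy
    simp only [Finset.mem_Ico] at hy
    obtain ⟨h1, h2⟩ := hy
    have hr1 : a * M ≤ ((y % M : ℕ) : ℝ) := by
      calc a * M ≤ (u₁ : ℝ) := Nat.le_ceil _
        _ ≤ ((y % M : ℕ) : ℝ) := by exact_mod_cast h1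
    have hr2 : ((y % M : ℕ) : ℝ) + 1 ≤ b * M := by
      calc ((y % M : ℕ) : ℝ) + 1 ≤ (v₁ : ℝ) := by exact_mod_cast h2
        _ ≤ b * M := Nat.floor_le hbM
    constructor
    · rw [le_div_iff₀ hMR]; linarith [ht0 y]
    · rw [div_lt_iff₀ hMR]; linarith [ht1 y]
  have hcard₂ : ((Finset.Ico Y₀ Y₁).filter (fun y =>
        (((y % M : ℕ) : ℝ) + t y) / M ∈ Set.Ico a b)).card
      ≤ ((Finset.Ico Y₀ Y₁).filter (fun y => y % M ∈ Finset.Ico u₂ v₂)).card := by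
    apply Finset.card_le_card
    apply Finset.monotone_filter_right
    intro y _ hy
    obtain ⟨h1, h2⟩ := hy
    rw [le_div_iff₀ hMR] at h1
    rw [div_lt_iff₀ hMR] at h2
    simp only [Finset.mem_Ico]
    constructor
    · have hq : (u₂ : ℝ) < ((y % M : ℕ) : ℝ) + 1 := by
        calc (u₂ : ℝ) ≤ a * M := Nat.floor_le haM
          _ ≤ ((y % M : ℕ) : ℝ) + t y := h1
          _ < ((y % M : ℕ) : ℝ) + 1 := by linarith [ht1 y]
      have hq2 : u₂ < y % M + 1 := by exact_mod_cast hq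
      omega
    · apply lt_min _ (Nat.mod_lt _ hM)
      have hq : ((y % M : ℕ) : ℝ) < b * M := by
        calc ((y % M : ℕ) : ℝ) ≤ ((y % M : ℕ) : ℝ) + t y := by linarith [ht0 y]
          _ < b * M := h2
      have h3 : ((y % M : ℕ) : ℝ) < (⌈b * M⌉₊ : ℝ) := lt_of_lt_of_le hq (Nat.le_ceil _)
      exact_mod_cast h3
  have hcnt₁ := count_mod_bounds M u₁ v₁ hM hv₁M hY
  have hcnt₂ := count_mod_bounds M u₂ v₂ hM hv₂M hY
  set R := ((Y₁ - Y₀ : ℕ) : ℝ) with hR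
  have hR0 : 0 ≤ R := by positivity
  set w₁ := ((v₁ - u₁ : ℕ) : ℝ) with hw₁
  set w₂ := ((v₂ - u₂ : ℕ) : ℝ) with hw₂
  set cnt := (((Finset.Ico Y₀ Y₁).filter fun y =>
      (((y % M : ℕ) : ℝ) + t y) / M ∈ Set.Ico a b).card : ℝ) with hcntd
  set cnt₁ := (((Finset.Ico Y₀ Y₁).filter fun y => y % M ∈ Finset.Ico u₁ v₁).card : ℝ) with hcd₁
  set cnt₂ := (((Finset.Ico Y₀ Y₁).filter fun y => y % M ∈ Finset.Ico u₂ v₂).card : ℝ) with hcd₂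
  have hc1 : cnt₁ ≤ cnt := by rw [hcd₁, hcntd]; exact_mod_cast hcard₁
  have hc2 : cnt ≤ cnt₂ := by rw [hcd₂, hcntd]; exact_mod_cast hcard₂
  clear hcard₁ hcard₂
  -- size bounds
  have hw₁l : (b - a) * M - 2 ≤ w₁ := by
    have e1 : b * M - 1 ≤ (v₁ : ℝ) := by
      have := Nat.lt_floor_add_one (b * M); linarith
    have e2 : (u₁ : ℝ) ≤ a * M + 1 := by
      have := Nat.ceil_lt_add_one haM; linarith
    calc (b - a) * M - 2 ≤ (v₁ : ℝ) - (u₁ : ℝ) := by nlinarith [e1, e2]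
      _ ≤ w₁ := cast_sub_ge _ _
  have hw₁u : w₁ ≤ (b - a) * M := by
    rcases le_total u₁ v₁ with h | h
    · rw [hw₁, Nat.cast_sub h]
      have e1 : (v₁ : ℝ) ≤ b * M := Nat.floor_le hbM
      have e2 : a * M ≤ (u₁ : ℝ) := Nat.le_ceil _
      nlinarith [e1, e2]
    · have h0 : v₁ - u₁ = 0 := by omega
      rw [hw₁, h0]; simp; nlinarith
  have hw₂u : w₂ ≤ (b - a) * M + 2 := by
    rcases le_total u₂ v₂ with h | h
    · rw [hw₂, Nat.cast_sub h]
      have e1 : (v₂ : ℝ) ≤ b * M + 1 := by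
        have q1 : (v₂ : ℝ) ≤ (⌈b * M⌉₊ : ℝ) := by exact_mod_cast min_le_left _ _
        have q2 := Nat.ceil_lt_add_one hbM
        linarith
      have e2 : a * M - 1 ≤ (u₂ : ℝ) := by
        have := Nat.lt_floor_add_one (a * M); linarith
      nlinarith [e1, e2]
    · have h0 : v₂ - u₂ = 0 := by omega
      rw [hw₂, h0]; simp; nlinarith
  have hw₂0 : (0:ℝ) ≤ w₂ := by rw [hw₂]; positivity
  have hw₁0 : (0:ℝ) ≤ w₁ := by rw [hw₁]; positivity
  rw [abs_le] at hcnt₁ hcnt₂ ⊢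
  obtain ⟨hA1, hA2⟩ := hcnt₁
  obtain ⟨hB1, hB2⟩ := hcnt₂
  have hdiv : 0 ≤ R / M := by positivity
  have e1 : R * w₁ / M = R / M * w₁ := by ring
  have e2 : R * w₂ / M = R / M * w₂ := by ring
  have s1 : R / M * ((b - a) * M - 2) ≤ R / M * w₁ := mul_le_mul_of_nonneg_left hw₁l hdiv
  have s2 : R / M * ((b - a) * M - 2) = (b - a) * R - 2 * R / M := by
    field_simp
  have s3 : R / M * w₂ ≤ R / M * ((b - a) * M + 2) := mul_le_mul_of_nonneg_left hw₂u hdiv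
  have s4 : R / M * ((b - a) * M + 2) = (b - a) * R + 2 * R / M := by
    field_simp
  have hab' : 0 ≤ b - a := by linarith
  constructor
  · have t1 : 2 * w₁ ≤ 2 * ((b - a) * M) := by linarith
    linarith [hA1, hc1, s1, s2, e1, t1]
  · have t2 : 2 * w₂ ≤ 2 * ((b - a) * M) + 4 := by linarith
    linarith [hB2, hc2, s3, s4, e2, t2]

lemma T_nine : T 9 = 9 := by
  have h : ∀ j ∈ Finset.Icc 1 9, (Nat.digits 10 j).length = 1 := by
    intro j hj
    simp only [Finset.mem_Icc] at hj
    rw [Nat.digits_def' (by norm_num : (1:ℕ) < 10) (by omega)]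
    have h10 : j / 10 = 0 := by omega
    rw [h10]
    simp
  rw [T, Finset.sum_congr rfl h]
  simp

lemma vOf_le {N v : ℕ} (h : N ≤ T v) : vOf N ≤ v := Nat.sInf_le h

lemma le_T_vOf (N : ℕ) : N ≤ T (vOf N) := by
  have h : {v | N ≤ T v}.Nonempty := ⟨N, show N ≤ T N from self_le_T N⟩
  exact Nat.sInf_mem h

lemma one_le_vOf {N : ℕ} (hN : 1 ≤ N) : 1 ≤ vOf N := by
  by_contra h
  push_neg at h
  interval_cases hv : vOf N
  · have := le_T_vOf N
    rw [hv, T_zero] at this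
    omega

lemma T_vOf_pred_lt {N : ℕ} (hN : 1 ≤ N) : T (vOf N - 1) < N := by
  by_contra h
  push_neg at h
  have h2 : vOf N ≤ vOf N - 1 := vOf_le h
  have := one_le_vOf hN
  omega

lemma vOf_ge_ten {N : ℕ} (hN : 10 ≤ N) : 10 ≤ vOf N := by
  by_contra h
  push_neg at h
  have h1 : T (vOf N) ≤ T 9 := T_mono (by omega)
  have := le_T_vOf N
  rw [T_nine] at h1
  omega

lemma Icc_partition (N : ℕ) (hN : 1 ≤ N) :
    Finset.Icc 1 N = (Finset.Icc 1 (vOf N)).biUnion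
      (fun y => Finset.Ioc (T (y - 1)) (min (T y) N)) := by
  ext n
  simp only [Finset.mem_Icc, Finset.mem_biUnion, Finset.mem_Ioc, le_min_iff]
  constructor
  · rintro ⟨h1, h2⟩
    refine ⟨vOf n, ⟨one_le_vOf h1, ?_⟩, T_vOf_pred_lt h1, le_T_vOf n, h2⟩
    exact vOf_le (le_trans h2 (le_T_vOf N))
  · rintro ⟨y, ⟨hy1, hy2⟩, hn1, hn2, hn3⟩
    omega

lemma pieces_disjoint (N : ℕ) : ∀ y ∈ Finset.Icc 1 (vOf N), ∀ y' ∈ Finset.Icc 1 (vOf N),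
    y ≠ y' → Disjoint (Finset.Ioc (T (y - 1)) (min (T y) N))
      (Finset.Ioc (T (y' - 1)) (min (T y') N)) := by
  have key : ∀ y y' : ℕ, y < y' → Disjoint (Finset.Ioc (T (y - 1)) (min (T y) N))
      (Finset.Ioc (T (y' - 1)) (min (T y') N)) := by
    intro y y' hlt
    rw [Finset.disjoint_left]
    intro n hn hn'
    simp only [Finset.mem_Ioc, le_min_iff] at hn hn'
    have h1 : T y ≤ T (y' - 1) := T_mono (by omega)
    omega
  intro y hy y' hy' hne
  rcases lt_or_gt_of_ne hne with h | h
  · exact key y y' h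
  · exact (key y' y h).symm

lemma card_partition (p : ℕ → Prop) [DecidablePred p] (N : ℕ) (hN : 1 ≤ N) :
    ((Finset.Icc 1 N).filter p).card
      = ∑ y ∈ Finset.Icc 1 (vOf N), ((Finset.Ioc (T (y - 1)) (min (T y) N)).filter p).card := by
  rw [Icc_partition N hN, Finset.filter_biUnion]
  exact Finset.card_biUnion fun y hy y' hy' hne =>
    Finset.disjoint_filter_filter (pieces_disjoint N y hy y' hy' hne)

lemma sizes_sum (N : ℕ) (hN : 1 ≤ N) :
    ∑ y ∈ Finset.Icc 1 (vOf N), (min (T y) N - T (y - 1)) = N := by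
  have h := card_partition (fun _ => True) N hN
  simp only [Finset.filter_true, Nat.card_Ioc, Nat.card_Icc] at h
  omega

lemma card_Ioc_filter_eq_sum (c ℓ : ℕ) (p : ℕ → Prop) [DecidablePred p] :
    ((Finset.Ioc c (c + ℓ)).filter p).card
      = ∑ j ∈ Finset.Icc 1 ℓ, if p (c + j) then 1 else 0 := by
  rw [Finset.card_filter]
  apply Finset.sum_nbij' (i := fun n => n - c) (j := fun j => c + j) <;>
    intro x hx <;> simp only [Finset.mem_Ioc, Finset.mem_Icc] at hx ⊢
  · omega
  · omega
  · omega
  · omega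
  · have h : c + (x - c) = x := by omega
    rw [h]

lemma sum_reflect (g : ℕ → ℝ) (ℓ : ℕ) :
    ∑ j ∈ Finset.Icc 1 ℓ, g (ℓ + 1 - j) = ∑ m ∈ Finset.Icc 1 ℓ, g m := by
  apply Finset.sum_nbij' (i := fun j => ℓ + 1 - j) (j := fun m => ℓ + 1 - m) <;>
    intro x hx <;> simp only [Finset.mem_Icc] at hx ⊢
  · omega
  · omega
  · omega
  · omega

lemma sum_pow_le (ℓ : ℕ) : ∑ m ∈ Finset.Icc 1 ℓ, (10:ℝ) ^ m ≤ 2 * 10 ^ ℓ := by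
  induction ℓ with
  | zero => simp
  | succ n ih =>
    rw [Finset.sum_Icc_succ_top (by omega)]
    have h1 : (10:ℝ) ^ n ≤ 10 ^ (n + 1) := by
      apply pow_le_pow_right₀ (by norm_num); omega
    rw [pow_succ] at *
    nlinarith [pow_pos (by norm_num : (0:ℝ) < 10) n]

lemma sum_inv_pow_le (ℓ : ℕ) : ∑ m ∈ Finset.Icc 1 ℓ, ((10:ℝ) ^ m)⁻¹ ≤ 1 := by
  have key : ∀ k : ℕ, ∑ m ∈ Finset.Icc 1 k, ((10:ℝ) ^ m)⁻¹ ≤ 1 - ((10:ℝ) ^ k)⁻¹ := by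
    intro k
    induction k with
    | zero => simp
    | succ n ih =>
      rw [Finset.sum_Icc_succ_top (by omega)]
      have h1 : ((10:ℝ) ^ (n+1))⁻¹ ≤ ((10:ℝ) ^ n)⁻¹ := by
        apply inv_anti₀ (by positivity)
        apply pow_le_pow_right₀ (by norm_num); omega
      have h2 : (0:ℝ) < ((10:ℝ) ^ (n+1))⁻¹ := by positivity
      have h3 : ((10:ℝ) ^ n)⁻¹ = 10 * ((10:ℝ) ^ (n+1))⁻¹ := by
        rw [pow_succ]; field_simp
      linarith
  have := key ℓ
  have h2 : (0:ℝ) ≤ ((10:ℝ) ^ ℓ)⁻¹ := by positivity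
  linarith

set_option maxHeartbeats 2000000 in
lemma main_bound {a b : ℝ} (ha : 0 ≤ a) (hab : a < b) (hb : b < 1) {N : ℕ} (hN : 10 ≤ N) :
    |(((Finset.Icc 1 N).filter fun n =>
        Int.fract ((10:ℝ) ^ (n - 1) * champ) ∈ Set.Ico a b).card : ℝ)
      - (b - a) * N| ≤ 21 * 10 ^ dlen (vOf N) := by
  have hN1 : 1 ≤ N := by omega
  set p : ℕ → Prop := fun n => Int.fract ((10:ℝ) ^ (n - 1) * champ) ∈ Set.Ico a b with hp
  set Y := vOf N with hYdef
  set L := dlen Y with hLdef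
  have hY1 : 1 ≤ Y := one_le_vOf hN1
  have hY10 : 10 ≤ Y := vOf_ge_ten hN
  have hL2 : 2 ≤ L := by
    have h10 : dlen 10 = 2 := (dlen_eq_iff (by norm_num)).mpr ⟨by norm_num, by norm_num⟩
    calc 2 = dlen 10 := h10.symm
      _ ≤ L := dlen_mono hY10
  have hba0 : 0 ≤ b - a := by linarith
  have hba1 : b - a ≤ 1 := by linarith
  -- step 1 : decomposition over y
  have h1 : ((Finset.Icc 1 N).filter p).card
      = ∑ y ∈ Finset.Icc 1 Y, ((Finset.Ioc (T (y - 1)) (min (T y) N)).filter p).card :=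
    card_partition p N hN1
  have h2 : (N : ℝ) = ∑ y ∈ Finset.Icc 1 Y, ((min (T y) N - T (y - 1) : ℕ) : ℝ) := by
    rw [← Nat.cast_sum]
    exact_mod_cast (sizes_sum N hN1).symm
  have h3 : (((Finset.Icc 1 N).filter p).card : ℝ) - (b - a) * N
      = ∑ y ∈ Finset.Icc 1 Y,
          ((((Finset.Ioc (T (y - 1)) (min (T y) N)).filter p).card : ℝ)
            - (b - a) * ((min (T y) N - T (y - 1) : ℕ) : ℝ)) := by
    rw [Finset.sum_sub_distrib, ← Finset.mul_sum, ← h2, h1, Nat.cast_sum]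
  -- step 2 : split off the top term y = Y
  have hsplit : ∑ y ∈ Finset.Icc 1 Y,
        ((((Finset.Ioc (T (y - 1)) (min (T y) N)).filter p).card : ℝ)
          - (b - a) * ((min (T y) N - T (y - 1) : ℕ) : ℝ))
      = (∑ y ∈ Finset.Icc 1 (Y - 1),
          ((((Finset.Ioc (T (y - 1)) (min (T y) N)).filter p).card : ℝ)
            - (b - a) * ((min (T y) N - T (y - 1) : ℕ) : ℝ)))
        + ((((Finset.Ioc (T (Y - 1)) (min (T Y) N)).filter p).card : ℝ)
            - (b - a) * ((min (T Y) N - T (Y - 1) : ℕ) : ℝ)) := by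
    have hYe : Y = Y - 1 + 1 := by omega
    conv_lhs => rw [hYe]
    rw [Finset.sum_Icc_succ_top (by omega)]
    rw [← hYe]
  -- top term bound
  have htop : |(((Finset.Ioc (T (Y - 1)) (min (T Y) N)).filter p).card : ℝ)
      - (b - a) * ((min (T Y) N - T (Y - 1) : ℕ) : ℝ)| ≤ (L : ℝ) := by
    set m := min (T Y) N - T (Y - 1) with hm
    have hcard : ((Finset.Ioc (T (Y - 1)) (min (T Y) N)).filter p).card ≤ m := by
      calc ((Finset.Ioc (T (Y - 1)) (min (T Y) N)).filter p).card
          ≤ (Finset.Ioc (T (Y - 1)) (min (T Y) N)).card := Finset.card_filter_le _ _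
        _ = m := Nat.card_Ioc _ _
    have hmL : m ≤ L := by
      have := T_pred hY1
      have h4 : min (T Y) N ≤ T Y := min_le_left _ _
      omega
    have hc1 : (((Finset.Ioc (T (Y - 1)) (min (T Y) N)).filter p).card : ℝ) ≤ (m : ℝ) := by
      exact_mod_cast hcard
    have hc0 : (0 : ℝ) ≤ (((Finset.Ioc (T (Y - 1)) (min (T Y) N)).filter p).card : ℝ) := by
      positivity
    have hmLr : (m : ℝ) ≤ (L : ℝ) := by exact_mod_cast hmL
    have hm0 : (0:ℝ) ≤ (m:ℝ) := by positivity
    rw [abs_le]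
    constructor <;> nlinarith
  -- step 3 : for y ≤ Y - 1, simplify the terms
  have hstep3 : ∀ y ∈ Finset.Icc 1 (Y - 1),
      ((((Finset.Ioc (T (y - 1)) (min (T y) N)).filter p).card : ℝ)
        - (b - a) * ((min (T y) N - T (y - 1) : ℕ) : ℝ))
      = ((((Finset.Ioc (T (y - 1)) (T y)).filter p).card : ℝ) - (b - a) * (dlen y : ℝ)) := by
    intro y hy
    simp only [Finset.mem_Icc] at hy
    have hTy : T y ≤ T (Y - 1) := T_mono (by omega)
    have hTyN : T y < N := lt_of_le_of_lt hTy (T_vOf_pred_lt hN1)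
    have hmin : min (T y) N = T y := min_eq_left (by omega)
    have h6 : T y - T (y - 1) = dlen y := by
      have := T_pred (show 1 ≤ y by omega)
      omega
    rw [hmin, h6]
  -- step 4 : block partition of Icc 1 (Y-1)
  have hpart : Finset.Icc 1 (Y - 1) = (Finset.Icc 1 L).biUnion
      (fun ℓ => Finset.Ico (10 ^ (ℓ - 1)) (min (10 ^ ℓ) Y)) := by
    ext y
    simp only [Finset.mem_Icc, Finset.mem_biUnion, Finset.mem_Ico, lt_min_iff]
    constructor
    · rintro ⟨hy1, hy2⟩
      refine ⟨dlen y, ⟨dlen_pos hy1, dlen_mono (by omega)⟩, pow_dlen_le hy1,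
        lt_pow_dlen y, by omega⟩
    · rintro ⟨ℓ, ⟨hℓ1, hℓ2⟩, hy1, hy2, hy3⟩
      have : 1 ≤ 10 ^ (ℓ - 1) := Nat.one_le_pow _ _ (by norm_num)
      omega
  have hblockdisj : (↑(Finset.Icc 1 L) : Set ℕ).PairwiseDisjoint
      (fun ℓ => Finset.Ico (10 ^ (ℓ - 1)) (min (10 ^ ℓ) Y)) := by
    intro ℓ hℓ ℓ' hℓ' hne
    have key : ∀ u u' : ℕ, u < u' → Disjoint (Finset.Ico (10 ^ (u - 1)) (min (10 ^ u) Y))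
        (Finset.Ico (10 ^ (u' - 1)) (min (10 ^ u') Y)) := by
      intro u u' hlt
      rw [Finset.disjoint_left]
      intro n hn hn'
      simp only [Finset.mem_Ico, lt_min_iff] at hn hn'
      have h5 : 10 ^ u ≤ 10 ^ (u' - 1) := Nat.pow_le_pow_right (by norm_num) (by omega)
      omega
    rcases lt_or_gt_of_ne hne with h | h
    · exact key ℓ ℓ' h
    · exact (key ℓ' ℓ h).symm
  -- step 5 : regroup and bound per block
  have hblocksum : ∑ y ∈ Finset.Icc 1 (Y - 1),
        ((((Finset.Ioc (T (y - 1)) (T y)).filter p).card : ℝ) - (b - a) * (dlen y : ℝ))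
      = ∑ ℓ ∈ Finset.Icc 1 L, ∑ y ∈ Finset.Ico (10 ^ (ℓ - 1)) (min (10 ^ ℓ) Y),
        ((((Finset.Ioc (T (y - 1)) (T y)).filter p).card : ℝ) - (b - a) * (dlen y : ℝ)) := by
    rw [hpart, Finset.sum_biUnion hblockdisj]
  -- per block bound
  have hperblock : ∀ ℓ ∈ Finset.Icc 1 L,
      |∑ y ∈ Finset.Ico (10 ^ (ℓ - 1)) (min (10 ^ ℓ) Y),
        ((((Finset.Ioc (T (y - 1)) (T y)).filter p).card : ℝ) - (b - a) * (dlen y : ℝ))|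
      ≤ 10 ^ (ℓ + 1) := by
    intro ℓ hℓ
    simp only [Finset.mem_Icc] at hℓ
    obtain ⟨hℓ1, hℓ2⟩ := hℓ
    set Y₀ := 10 ^ (ℓ - 1) with hY₀
    set Y₁ := min (10 ^ ℓ) Y with hY₁
    have hY₀Y₁ : Y₀ ≤ Y₁ := by
      rw [hY₀, hY₁]
      apply le_min (Nat.pow_le_pow_right (by norm_num) (by omega))
      calc 10 ^ (ℓ - 1) ≤ 10 ^ (L - 1) := Nat.pow_le_pow_right (by norm_num) (by omega)
        _ ≤ Y := pow_dlen_le hY1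
    have hdleny : ∀ y ∈ Finset.Ico Y₀ Y₁, dlen y = ℓ := by
      intro y hy
      simp only [Finset.mem_Ico, hY₀, hY₁, lt_min_iff] at hy
      exact (dlen_eq_iff hℓ1).mpr ⟨hy.1, hy.2.1⟩
    have hy1' : ∀ y ∈ Finset.Ico Y₀ Y₁, 1 ≤ y := by
      intro y hy
      simp only [Finset.mem_Ico, hY₀, hY₁] at hy
      have : 1 ≤ 10 ^ (ℓ - 1) := Nat.one_le_pow _ _ (by norm_num)
      omega
    -- rewrite each A_y as a sum over j
    have hAy : ∀ y ∈ Finset.Ico Y₀ Y₁,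
        ((((Finset.Ioc (T (y - 1)) (T y)).filter p).card : ℝ) - (b - a) * (dlen y : ℝ))
        = ∑ j ∈ Finset.Icc 1 ℓ, ((if p (T (y - 1) + j) then (1:ℝ) else 0) - (b - a)) := by
      intro y hy
      have hTy : T y = T (y - 1) + ℓ := by
        rw [T_pred (hy1' y hy), hdleny y hy]
      have hcs : ((Finset.Ioc (T (y - 1)) (T y)).filter p).card
          = ∑ j ∈ Finset.Icc 1 ℓ, if p (T (y - 1) + j) then 1 else 0 := by
        rw [hTy]
        exact card_Ioc_filter_eq_sum (T (y - 1)) ℓ p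
      rw [Finset.sum_sub_distrib, Finset.sum_const, Nat.card_Icc]
      rw [hcs, Nat.cast_sum, hdleny y hy]
      simp only [Nat.add_sub_cancel, nsmul_eq_mul]
      congr 1
      · apply Finset.sum_congr rfl
        intro j hj
        split <;> simp
      · ring
    rw [Finset.sum_congr rfl hAy, Finset.sum_comm]
    -- now inner sums over y are counts
    have hcnt : ∀ j ∈ Finset.Icc 1 ℓ,
        ∑ y ∈ Finset.Ico Y₀ Y₁, ((if p (T (y - 1) + j) then (1:ℝ) else 0) - (b - a))
        = (((Finset.Ico Y₀ Y₁).filter fun y =>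
            (((y % 10 ^ (ℓ + 1 - j) : ℕ) : ℝ) + tl y) / (10:ℝ) ^ (ℓ + 1 - j)
              ∈ Set.Ico a b).card : ℝ)
          - (b - a) * ((Y₁ - Y₀ : ℕ) : ℝ) := by
      intro j hj
      simp only [Finset.mem_Icc] at hj
      rw [Finset.sum_sub_distrib, Finset.sum_const, Nat.card_Ico, nsmul_eq_mul]
      congr 1
      · rw [Finset.sum_boole]
        congr 1
        apply congrArg Finset.card
        apply Finset.filter_congr
        intro y hy
        have he := fract_eq (hy1' y hy) hj.1 (by rw [hdleny y hy]; exact hj.2)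
        rw [hdleny y hy] at he
        simp only [hp]
        rw [he]
      · rw [mul_comm]
    rw [Finset.sum_congr rfl hcnt]
    have hbd : ∀ j ∈ Finset.Icc 1 ℓ,
        |(((Finset.Ico Y₀ Y₁).filter fun y =>
            (((y % 10 ^ (ℓ + 1 - j) : ℕ) : ℝ) + tl y) / (10:ℝ) ^ (ℓ + 1 - j)
              ∈ Set.Ico a b).card : ℝ) - (b - a) * ((Y₁ - Y₀ : ℕ) : ℝ)|
        ≤ 2 * ((Y₁ - Y₀ : ℕ) : ℝ) * ((10:ℝ) ^ (ℓ + 1 - j))⁻¹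
          + 2 * (b - a) * (10:ℝ) ^ (ℓ + 1 - j) + 4 := by
      intro j hj
      have hcast : ((10 ^ (ℓ + 1 - j) : ℕ) : ℝ) = (10:ℝ) ^ (ℓ + 1 - j) := by
        push_cast; ring
      have h8 := count_cond_bounds ha hab (le_of_lt hb)
        (10 ^ (ℓ + 1 - j)) (Nat.one_le_pow _ _ (by norm_num)) tl tl_nonneg tl_lt_one hY₀Y₁
      rw [hcast] at h8
      rw [div_eq_mul_inv] at h8
      exact h8
    set R := ((Y₁ - Y₀ : ℕ) : ℝ) with hR
    have hR0 : (0:ℝ) ≤ R := by rw [hR]; positivity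
    have hRle : R ≤ 10 ^ ℓ := by
      rw [hR]
      have h9 : Y₁ - Y₀ ≤ 10 ^ ℓ := le_trans (Nat.sub_le _ _) (min_le_left _ _)
      calc ((Y₁ - Y₀ : ℕ) : ℝ) ≤ ((10 ^ ℓ : ℕ) : ℝ) := by exact_mod_cast h9
        _ = 10 ^ ℓ := by push_cast; ring
    have hS1 : ∑ j ∈ Finset.Icc 1 ℓ, ((10:ℝ) ^ (ℓ + 1 - j))⁻¹ ≤ 1 := by
      rw [sum_reflect (fun m => ((10:ℝ) ^ m)⁻¹) ℓ]
      exact sum_inv_pow_le ℓ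
    have hS1' : (0:ℝ) ≤ ∑ j ∈ Finset.Icc 1 ℓ, ((10:ℝ) ^ (ℓ + 1 - j))⁻¹ :=
      Finset.sum_nonneg fun j hj => by positivity
    have hS2 : ∑ j ∈ Finset.Icc 1 ℓ, (10:ℝ) ^ (ℓ + 1 - j) ≤ 2 * 10 ^ ℓ := by
      rw [sum_reflect (fun m => (10:ℝ) ^ m) ℓ]
      exact sum_pow_le ℓ
    have hS2' : (0:ℝ) ≤ ∑ j ∈ Finset.Icc 1 ℓ, (10:ℝ) ^ (ℓ + 1 - j) :=
      Finset.sum_nonneg fun j hj => by positivity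
    have hℓle : (ℓ : ℝ) ≤ 10 ^ ℓ := by
      have := Nat.lt_pow_self (n := ℓ) (by norm_num : 1 < 10)
      calc (ℓ:ℝ) ≤ ((10 ^ ℓ : ℕ) : ℝ) := by exact_mod_cast this.le
        _ = 10 ^ ℓ := by push_cast; ring
    calc |∑ j ∈ Finset.Icc 1 ℓ,
          ((((Finset.Ico Y₀ Y₁).filter fun y =>
            (((y % 10 ^ (ℓ + 1 - j) : ℕ) : ℝ) + tl y) / (10:ℝ) ^ (ℓ + 1 - j)
              ∈ Set.Ico a b).card : ℝ) - (b - a) * R)|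
        ≤ ∑ j ∈ Finset.Icc 1 ℓ,
          |(((Finset.Ico Y₀ Y₁).filter fun y =>
            (((y % 10 ^ (ℓ + 1 - j) : ℕ) : ℝ) + tl y) / (10:ℝ) ^ (ℓ + 1 - j)
              ∈ Set.Ico a b).card : ℝ) - (b - a) * R| := Finset.abs_sum_le_sum_abs _ _
      _ ≤ ∑ j ∈ Finset.Icc 1 ℓ,
          (2 * R * ((10:ℝ) ^ (ℓ + 1 - j))⁻¹ + 2 * (b - a) * (10:ℝ) ^ (ℓ + 1 - j) + 4) :=
          Finset.sum_le_sum hbd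
      _ = 2 * R * (∑ j ∈ Finset.Icc 1 ℓ, ((10:ℝ) ^ (ℓ + 1 - j))⁻¹)
          + 2 * (b - a) * (∑ j ∈ Finset.Icc 1 ℓ, (10:ℝ) ^ (ℓ + 1 - j)) + 4 * ℓ := by
          rw [Finset.sum_add_distrib, Finset.sum_add_distrib, ← Finset.mul_sum,
            ← Finset.mul_sum, Finset.sum_const, Nat.card_Icc]
          simp only [Nat.add_sub_cancel, nsmul_eq_mul]
          ring
      _ ≤ 10 ^ (ℓ + 1) := by
          have t1 : 2 * R * (∑ j ∈ Finset.Icc 1 ℓ, ((10:ℝ) ^ (ℓ + 1 - j))⁻¹) ≤ 2 * 10 ^ ℓ := by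
            nlinarith
          have t2 : 2 * (b - a) * (∑ j ∈ Finset.Icc 1 ℓ, (10:ℝ) ^ (ℓ + 1 - j))
              ≤ 4 * 10 ^ ℓ := by nlinarith
          have t3 : (4:ℝ) * ℓ ≤ 4 * 10 ^ ℓ := by linarith
          have t4 : (10:ℝ) ^ (ℓ + 1) = 10 * 10 ^ ℓ := by rw [pow_succ]; ring
          linarith
  -- final assembly
  rw [h3, hsplit]
  have hmid := Finset.sum_congr rfl hstep3
  rw [hmid, hblocksum]
  have hLle : (L : ℝ) ≤ 10 ^ L := by
    have := Nat.lt_pow_self (n := L) (by norm_num : 1 < 10)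
    calc (L:ℝ) ≤ ((10 ^ L : ℕ) : ℝ) := by exact_mod_cast this.le
      _ = 10 ^ L := by push_cast; ring
  have hsumpow : ∑ ℓ ∈ Finset.Icc 1 L, (10:ℝ) ^ (ℓ + 1) ≤ 20 * 10 ^ L := by
    have he : ∑ ℓ ∈ Finset.Icc 1 L, (10:ℝ) ^ (ℓ + 1)
        = (∑ ℓ ∈ Finset.Icc 1 L, (10:ℝ) ^ ℓ) * 10 := by
      rw [Finset.sum_mul]
      apply Finset.sum_congr rfl
      intro ℓ hℓ
      rw [pow_succ]
    rw [he]
    have := sum_pow_le L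
    nlinarith
  calc |∑ ℓ ∈ Finset.Icc 1 L, ∑ y ∈ Finset.Ico (10 ^ (ℓ - 1)) (min (10 ^ ℓ) Y),
          ((((Finset.Ioc (T (y - 1)) (T y)).filter p).card : ℝ) - (b - a) * (dlen y : ℝ))
        + ((((Finset.Ioc (T (Y - 1)) (min (T Y) N)).filter p).card : ℝ)
            - (b - a) * ((min (T Y) N - T (Y - 1) : ℕ) : ℝ))|
      ≤ |∑ ℓ ∈ Finset.Icc 1 L, ∑ y ∈ Finset.Ico (10 ^ (ℓ - 1)) (min (10 ^ ℓ) Y),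
          ((((Finset.Ioc (T (y - 1)) (T y)).filter p).card : ℝ) - (b - a) * (dlen y : ℝ))|
        + |(((Finset.Ioc (T (Y - 1)) (min (T Y) N)).filter p).card : ℝ)
            - (b - a) * ((min (T Y) N - T (Y - 1) : ℕ) : ℝ)| := abs_add_le _ _
    _ ≤ (∑ ℓ ∈ Finset.Icc 1 L, |∑ y ∈ Finset.Ico (10 ^ (ℓ - 1)) (min (10 ^ ℓ) Y),
          ((((Finset.Ioc (T (y - 1)) (T y)).filter p).card : ℝ) - (b - a) * (dlen y : ℝ))|)
        + (L : ℝ) := add_le_add (Finset.abs_sum_le_sum_abs _ _) htop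
    _ ≤ (∑ ℓ ∈ Finset.Icc 1 L, (10:ℝ) ^ (ℓ + 1)) + (L : ℝ) :=
        add_le_add (Finset.sum_le_sum hperblock) le_rfl
    _ ≤ 20 * 10 ^ L + 10 ^ L := add_le_add hsumpow hLle
    _ = 21 * 10 ^ L := by ring

lemma T_low {L : ℕ} (hL : 2 ≤ L) : 9 * 10 ^ (L - 2) * (L - 1) ≤ T (10 ^ (L - 1) - 1) := by
  have hsub : Finset.Ico (10 ^ (L - 2)) (10 ^ (L - 1)) ⊆ Finset.Icc 1 (10 ^ (L - 1) - 1) := by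
    intro y hy
    simp only [Finset.mem_Ico, Finset.mem_Icc] at hy ⊢
    have h1 : 1 ≤ 10 ^ (L - 2) := Nat.one_le_pow _ _ (by norm_num)
    omega
  have hdl : ∀ y ∈ Finset.Ico (10 ^ (L - 2)) (10 ^ (L - 1)), dlen y = L - 1 := by
    intro y hy
    simp only [Finset.mem_Ico] at hy
    apply (dlen_eq_iff (by omega)).mpr
    have he : L - 1 - 1 = L - 2 := by omega
    rw [he]
    exact hy
  calc 9 * 10 ^ (L - 2) * (L - 1)
      = ∑ y ∈ Finset.Ico (10 ^ (L - 2)) (10 ^ (L - 1)), dlen y := by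
        rw [Finset.sum_congr rfl hdl, Finset.sum_const, Nat.card_Ico, smul_eq_mul]
        have h1 : 10 ^ (L - 1) = 10 * 10 ^ (L - 2) := by
          rw [← pow_succ']
          congr 1
          omega
        have h2 : 10 ^ (L - 1) - 10 ^ (L - 2) = 9 * 10 ^ (L - 2) := by omega
        rw [h2]
    _ ≤ ∑ j ∈ Finset.Icc 1 (10 ^ (L - 1) - 1), dlen j := Finset.sum_le_sum_of_subset hsub
    _ = T (10 ^ (L - 1) - 1) := (T_def _).symm


/-- There exist `K₁ > 0` and `N₀` such that for all `N ≥ N₀`,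
`D(c, N) < K₁ / log N` for the Champernowne constant `c`. -/
theorem champernowne_discrepancy_upper :
    ∃ K₁ : ℝ, 0 < K₁ ∧ ∃ N₀ : ℕ, ∀ N : ℕ, N₀ ≤ N → D champ N < K₁ / Real.log N := by
  refine ⟨100000, by norm_num, 10, fun N hN => ?_⟩
  have hN1 : (1:ℝ) < N := by
    have : (10:ℝ) ≤ N := by exact_mod_cast hN
    linarith
  have hN0 : (0:ℝ) < N := by linarith
  have hlog : 0 < Real.log N := Real.log_pos hN1
  set Y := vOf N with hYdef
  set L := dlen Y with hLdef
  have hY1 : 1 ≤ Y := one_le_vOf (by omega)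
  have hY10 : 10 ≤ Y := vOf_ge_ten hN
  have hL2 : 2 ≤ L := by
    have h10 : dlen 10 = 2 := (dlen_eq_iff (by norm_num)).mpr ⟨by norm_num, by norm_num⟩
    calc 2 = dlen 10 := h10.symm
      _ ≤ L := dlen_mono hY10
  -- lower bound on N
  have hNlow : (9 * 10 ^ (L - 2) * (L - 1) : ℕ) < N := by
    have h1 : 10 ^ (L - 1) ≤ Y := pow_dlen_le hY1
    have h2 : T (10 ^ (L - 1) - 1) ≤ T (Y - 1) := T_mono (by omega)
    have h3 := T_low hL2
    have h4 := T_vOf_pred_lt (show 1 ≤ N by omega)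
    calc 9 * 10 ^ (L - 2) * (L - 1) ≤ T (10 ^ (L - 1) - 1) := h3
      _ ≤ T (Y - 1) := h2
      _ < N := h4
  have hNlowR : (9:ℝ) * 10 ^ (L - 2) * ((L - 1 : ℕ) : ℝ) ≤ (N:ℝ) := by
    have := (Nat.cast_le (α := ℝ)).mpr hNlow.le
    push_cast at this
    convert this using 2 <;> push_cast <;> ring
  -- upper bound on log N
  have hNup : Real.log N ≤ 36 * ((L - 1 : ℕ) : ℝ) := by
    have h1 : N ≤ 10 ^ (2 * L) := by
      calc N ≤ T Y := le_T_vOf N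
        _ ≤ Y * dlen Y := T_le Y
        _ ≤ 10 ^ L * 10 ^ L := by
            apply Nat.mul_le_mul (le_of_lt (lt_pow_dlen Y))
            rw [← hLdef]
            exact le_of_lt (Nat.lt_pow_self (n := L) (by norm_num))
        _ = 10 ^ (2 * L) := by rw [← pow_add]; congr 1; omega
    have h2 : (N:ℝ) ≤ (10:ℝ) ^ (2 * L) := by
      calc (N:ℝ) ≤ ((10 ^ (2 * L) : ℕ) : ℝ) := by exact_mod_cast h1
        _ = (10:ℝ) ^ (2 * L) := by push_cast; ring
    have h3 : Real.log N ≤ Real.log ((10:ℝ) ^ (2 * L)) :=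
      Real.log_le_log hN0 h2
    rw [Real.log_pow] at h3
    have h4 : Real.log 10 ≤ 9 := by
      have := Real.log_le_sub_one_of_pos (by norm_num : (0:ℝ) < 10)
      linarith
    have h5 : (2 * L : ℕ) * Real.log 10 ≤ (2 * L : ℕ) * 9 := by
      apply mul_le_mul_of_nonneg_left h4 (by positivity)
    have h6 : ((2 * L : ℕ) : ℝ) * 9 ≤ 36 * ((L - 1 : ℕ) : ℝ) := by
      have e1 : ((2 * L : ℕ) : ℝ) = 2 * (L : ℝ) := by push_cast; ring
      have e2 : ((L - 1 : ℕ) : ℝ) = (L : ℝ) - 1 := by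
        rw [Nat.cast_sub (by omega)]; push_cast; ring
      rw [e1, e2]
      have : (2:ℝ) ≤ (L:ℝ) := by exact_mod_cast hL2
      nlinarith
    calc Real.log N ≤ ((2 * L : ℕ) : ℝ) * Real.log 10 := h3
      _ ≤ ((2 * L : ℕ) : ℝ) * 9 := h5
      _ ≤ 36 * ((L - 1 : ℕ) : ℝ) := h6
  have hK : (1:ℝ) ≤ ((L - 1 : ℕ) : ℝ) := by
    have : 1 ≤ L - 1 := by omega
    exact_mod_cast this
  -- the sSup bound
  have hbound : D champ N ≤ 8424 / Real.log N := by
    rw [D, discSeq]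
    apply Real.sSup_le
    · rintro x ⟨A, B, hA, hAB, hB1, rfl⟩
      have hmb := main_bound hA hAB hB1 hN
      set c := (((Finset.Icc 1 N).filter fun n =>
        Int.fract ((10:ℝ) ^ (n - 1) * champ) ∈ Set.Ico A B).card : ℝ) with hc
      have he : c / N - (B - A) = (c - (B - A) * N) / N := by field_simp
      rw [he, abs_div, abs_of_pos hN0]
      have e1 : |c - (B - A) * N| / N ≤ (21 * (10:ℝ) ^ L) / N :=
        (div_le_div_iff_of_pos_right hN0).mpr hmb
      have e2 : (21 * (10:ℝ) ^ L) / N ≤ 8424 / Real.log N := by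
        rw [div_le_div_iff₀ hN0 hlog]
        have p1 : (0:ℝ) < (10:ℝ) ^ (L - 2) := by positivity
        have hpow : (10:ℝ) ^ L = 100 * 10 ^ (L - 2) := by
          calc (10:ℝ) ^ L = 10 ^ (2 + (L - 2)) := by congr 1; omega
            _ = 100 * 10 ^ (L - 2) := by rw [pow_add]; norm_num
        have t1 : 21 * (10:ℝ) ^ L * Real.log N
            ≤ 21 * (10:ℝ) ^ L * (36 * ((L - 1 : ℕ) : ℝ)) :=
          mul_le_mul_of_nonneg_left hNup (by positivity)
        have t2 : 21 * (10:ℝ) ^ L * (36 * ((L - 1 : ℕ) : ℝ))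
            = 75600 * (10:ℝ) ^ (L - 2) * ((L - 1 : ℕ) : ℝ) := by
          rw [hpow]; ring
        have t3 : (8424:ℝ) * (9 * 10 ^ (L - 2) * ((L - 1 : ℕ) : ℝ)) ≤ 8424 * N :=
          mul_le_mul_of_nonneg_left hNlowR (by norm_num)
        have t4 : 75600 * (10:ℝ) ^ (L - 2) * ((L - 1 : ℕ) : ℝ)
            ≤ 8424 * (9 * 10 ^ (L - 2) * ((L - 1 : ℕ) : ℝ)) := by
          nlinarith [p1, hK, mul_nonneg p1.le (le_trans zero_le_one hK)]
        linarith
      calc |c - (B - A) * N| / N ≤ (21 * (10:ℝ) ^ L) / N := e1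
        _ ≤ 8424 / Real.log N := e2
    · positivity
  calc D champ N ≤ 8424 / Real.log N := hbound
    _ < 100000 / Real.log N := by
      apply (div_lt_div_iff_of_pos_right hlog).mpr
      norm_num
end

section
/- Let α ∈ [0,1), let B₁ and B₂ be digit blocks of equal length k ≥ 1, and let C > 0. If |occ(α, B₁, N) − occ(α, B₂, N)| > C·N/log N holds for infinitely many N ∈ ℕ, then D(α, N) > (C/3)/log N holds for infinitely many N ∈ ℕ. -/
open scoped Classical

/-- digits sum bound -/
lemma sum_digits_lt (n : ℕ) (c : ℕ → ℕ) (hc : ∀ s, s < n → c s < 10) :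
    ∑ s ∈ Finset.range n, c s * 10 ^ s < 10 ^ n := by
  induction n with
  | zero => simp
  | succ n ih =>
    rw [Finset.sum_range_succ]
    have h1 := ih (fun s hs => hc s (hs.trans (Nat.lt_succ_self n)))
    have h2 : c n * 10 ^ n ≤ 9 * 10 ^ n :=
      Nat.mul_le_mul_right _ (Nat.lt_succ_iff.mp (hc n (Nat.lt_succ_self n)))
    have : (10:ℕ) ^ (n+1) = 10 ^ n + 9 * 10 ^ n := by ring
    omega

lemma digit_decomp : ∀ (k F : ℕ), F < 10 ^ k →
    ∑ s ∈ Finset.range k, (F / 10 ^ s % 10) * 10 ^ s = F := by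
  intro k
  induction k with
  | zero => intro F hF; interval_cases F; simp
  | succ n ih =>
    intro F hF
    rw [Finset.sum_range_succ']
    have key : ∀ s : ℕ, (F / 10 ^ (s+1) % 10) * 10 ^ (s+1)
        = ((F / 10) / 10 ^ s % 10) * 10 ^ s * 10 := by
      intro s
      rw [Nat.div_div_eq_div_mul, pow_succ]
      ring_nf
    simp only [key]
    rw [← Finset.sum_mul, ih (F / 10) (by
      have : 10 ^ (n+1) = 10 ^ n * 10 := pow_succ 10 n
      omega)]
    simp [pow_zero]
    omega

lemma extract_little (k t : ℕ) (c : ℕ → ℕ) (hc : ∀ s, c s < 10) (ht : t < k) :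
    (∑ s ∈ Finset.range k, c s * 10 ^ s) / 10 ^ t % 10 = c t := by
  have hsplit : ∑ s ∈ Finset.range k, c s * 10 ^ s
      = (∑ s ∈ Finset.range t, c s * 10 ^ s) + ∑ s ∈ Finset.Ico t k, c s * 10 ^ s := by
    rw [Finset.range_eq_Ico, ← Finset.sum_Ico_consecutive _ (Nat.zero_le t) ht.le, Finset.range_eq_Ico]
  have hre : ∑ s ∈ Finset.Ico t k, c s * 10 ^ s
      = (∑ s ∈ Finset.range (k - t), c (t + s) * 10 ^ s) * 10 ^ t := by
    rw [Finset.sum_Ico_eq_sum_range, Finset.sum_mul]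
    apply Finset.sum_congr rfl
    intro s _
    rw [pow_add]; ring
  have hR : (∑ s ∈ Finset.range t, c s * 10 ^ s) < 10 ^ t :=
    sum_digits_lt t c (fun s _ => hc s)
  rw [hsplit, hre]
  rw [Nat.add_mul_div_right _ _ (pow_pos (by norm_num) t),
    Nat.div_eq_of_lt hR, Nat.zero_add]
  obtain ⟨u, hu⟩ : ∃ u, k - t = u + 1 := ⟨k - t - 1, by omega⟩
  rw [hu, Finset.sum_range_succ']
  have key : ∀ s : ℕ, c (t + (s+1)) * 10 ^ (s+1) = c (t + 1 + s) * 10 ^ s * 10 := by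
    intro s
    rw [pow_succ, show t + (s+1) = t+1+s by omega]; ring
  simp only [key]
  rw [← Finset.sum_mul]
  simp [pow_zero]
  have := hc t
  omega

/-- The digit at position i+j is a digit of the fractional part. -/
lemma digit_fract_eq (α : ℝ) (i j : ℕ) (hi : 1 ≤ i) :
    digit α (i + j) = ⌊Int.fract ((10:ℝ) ^ (i - 1) * α) * 10 ^ (j + 1)⌋₊ % 10 := by
  set y : ℝ := (10:ℝ) ^ (i - 1) * α with hy
  have hpow : (10:ℝ) ^ (i + j) = (10:ℝ) ^ (i - 1) * 10 ^ (j + 1) := by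
    rw [← pow_add]; congr 1; omega
  have h1 : α * (10:ℝ) ^ (i + j) = (⌊y⌋ : ℝ) * 10 ^ (j + 1) + Int.fract y * 10 ^ (j + 1) := by
    rw [hpow, ← add_mul, Int.floor_add_fract]; ring
  have h2 : ⌊α * (10:ℝ) ^ (i + j)⌋ = ⌊y⌋ * 10 ^ (j + 1) + ⌊Int.fract y * 10 ^ (j + 1)⌋ := by
    rw [h1, show ((⌊y⌋:ℝ) * 10 ^ (j+1)) = ((⌊y⌋ * 10 ^ (j+1) : ℤ) : ℝ) by push_cast; ring,
      Int.floor_intCast_add]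
  have h3 : (0:ℝ) ≤ Int.fract y * 10 ^ (j + 1) :=
    mul_nonneg (Int.fract_nonneg y) (by positivity)
  have h4 : ⌊Int.fract y * 10 ^ (j + 1)⌋ = (⌊Int.fract y * 10 ^ (j + 1)⌋₊ : ℤ) :=
    (Int.natCast_floor_eq_floor h3).symm
  unfold digit
  rw [h2, h4]
  have : (⌊y⌋ * 10 ^ (j + 1) + (⌊Int.fract y * 10 ^ (j + 1)⌋₊ : ℤ)) % 10
      = ((⌊Int.fract y * 10 ^ (j + 1)⌋₊ : ℤ)) % 10 := by
    rw [add_comm, show ⌊y⌋ * 10 ^ (j+1) = (⌊y⌋ * 10 ^ j) * 10 by ring, Int.add_mul_emod_self_right]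
  rw [this]
  have : ((⌊Int.fract y * 10 ^ (j + 1)⌋₊ : ℤ)) % 10 = ((⌊Int.fract y * 10 ^ (j + 1)⌋₊ % 10 : ℕ) : ℤ) := by
    push_cast; ring
  rw [this, Int.toNat_natCast]

lemma floor_fract_div (x : ℝ) (k j : ℕ) (hj : j < k) :
    ⌊x * 10 ^ (j + 1)⌋₊ = ⌊x * 10 ^ k⌋₊ / 10 ^ (k - 1 - j) := by
  have h : x * 10 ^ (j + 1) = (x * 10 ^ k) / ((10 ^ (k - 1 - j) : ℕ) : ℝ) := by
    push_cast
    rw [show (10:ℝ) ^ k = 10 ^ (j+1) * 10 ^ (k-1-j) by rw [← pow_add]; congr 1; omega]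
    field_simp
  rw [h, Nat.floor_div_natCast]

/-- value of block as integer, little-endian weighted from the right -/
def bFun {k : ℕ} (B : Fin k → Fin 10) : ℕ → ℕ :=
  fun t => if h : t < k then (B ⟨t, h⟩ : ℕ) else 0

def bVal {k : ℕ} (B : Fin k → Fin 10) : ℕ :=
  ∑ s ∈ Finset.range k, bFun B (k - 1 - s) * 10 ^ s

lemma bFun_lt {k : ℕ} (B : Fin k → Fin 10) (t : ℕ) : bFun B t < 10 := by
  unfold bFun; split
  · exact (B _).isLt
  · norm_num

lemma bVal_lt {k : ℕ} (B : Fin k → Fin 10) : bVal B < 10 ^ k :=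
  sum_digits_lt k _ (fun s _ => bFun_lt B _)

lemma digits_eq_iff (k f : ℕ) (hf : f < 10 ^ k) (c : ℕ → ℕ) (hc : ∀ s, c s < 10) :
    (∀ s, s < k → f / 10 ^ s % 10 = c s) ↔ f = ∑ s ∈ Finset.range k, c s * 10 ^ s := by
  constructor
  · intro h
    have hd := digit_decomp k f hf
    conv_lhs => rw [← hd]
    exact Finset.sum_congr rfl (fun s hs => by rw [h s (Finset.mem_range.mp hs)])
  · intro h s hs; rw [h]; exact extract_little k s c hc hs

lemma block_iff {k : ℕ} (hk : 1 ≤ k) (B : Fin k → Fin 10) (α : ℝ) (i : ℕ) (hi : 1 ≤ i) :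
    (∀ j : Fin k, digit α (i + (j : ℕ)) = (B j : ℕ)) ↔
      Int.fract ((10:ℝ) ^ (i - 1) * α) ∈
        Set.Ico ((bVal B : ℝ) / 10 ^ k) (((bVal B : ℝ) + 1) / 10 ^ k) := by
  set x : ℝ := Int.fract ((10:ℝ) ^ (i - 1) * α) with hx
  have hx0 : 0 ≤ x := Int.fract_nonneg _
  have hx1 : x < 1 := Int.fract_lt_one _
  set f : ℕ := ⌊x * 10 ^ k⌋₊ with hfdef
  have hfk : f < 10 ^ k := by
    rw [hfdef]
    apply Nat.floor_lt (by positivity) |>.mpr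
    calc x * 10 ^ k < 1 * 10 ^ k := by
          apply mul_lt_mul_of_pos_right hx1 (by positivity)
      _ = ((10 ^ k : ℕ) : ℝ) := by push_cast; ring
  -- step 1: digit values
  have hdig : ∀ j : Fin k, digit α (i + (j : ℕ)) = f / 10 ^ (k - 1 - (j : ℕ)) % 10 := by
    intro j
    rw [digit_fract_eq α i (j : ℕ) hi, floor_fract_div x k (j : ℕ) j.isLt]
  -- step 2: reformulate as little-endian digit condition
  have hstep : (∀ j : Fin k, digit α (i + (j : ℕ)) = (B j : ℕ)) ↔
      (∀ s, s < k → f / 10 ^ s % 10 = bFun B (k - 1 - s)) := by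
    constructor
    · intro h s hs
      have hlt : k - 1 - s < k := by omega
      have := h ⟨k - 1 - s, hlt⟩
      rw [hdig ⟨k - 1 - s, hlt⟩] at this
      simp only at this
      rw [show k - 1 - (k - 1 - s) = s by omega] at this
      rw [this]
      unfold bFun
      rw [dif_pos hlt]
    · intro h j
      rw [hdig j]
      have hs : k - 1 - (j : ℕ) < k := by omega
      have := h (k - 1 - (j : ℕ)) hs
      rw [show k - 1 - (k - 1 - (j : ℕ)) = (j : ℕ) by omega] at this
      rw [this]
      unfold bFun
      rw [dif_pos j.isLt]
  rw [hstep, digits_eq_iff k f hfk _ (fun s => bFun_lt B _)]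
  show f = bVal B ↔ _
  -- step 3: floor characterization
  have h10 : (0:ℝ) < 10 ^ k := by positivity
  rw [show (f = bVal B) ↔ (⌊x * 10 ^ k⌋₊ = bVal B) from Iff.rfl,
    Nat.floor_eq_iff (by positivity), Set.mem_Ico]
  constructor
  · rintro ⟨h1, h2⟩
    refine ⟨?_, ?_⟩
    · rw [div_le_iff₀ h10]; exact h1
    · rw [lt_div_iff₀ h10]; push_cast at h2 ⊢; linarith
  · rintro ⟨h1, h2⟩
    rw [div_le_iff₀ h10] at h1
    rw [lt_div_iff₀ h10] at h2
    refine ⟨h1, ?_⟩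
    push_cast at h2 ⊢; linarith

lemma occ_eq {k : ℕ} (hk : 1 ≤ k) (B : Fin k → Fin 10) (α : ℝ) (N : ℕ) :
    occ α B N = ((Finset.Icc 1 (N + 1 - k)).filter fun n =>
      Int.fract ((10:ℝ) ^ (n - 1) * α) ∈
        Set.Ico ((bVal B : ℝ) / 10 ^ k) (((bVal B : ℝ) + 1) / 10 ^ k)).card := by
  unfold occ
  congr 1
  ext i
  simp only [Finset.mem_filter, Finset.mem_Icc]
  constructor
  · rintro ⟨⟨h1, h2⟩, h3, h4⟩
    exact ⟨⟨h1, by omega⟩, (block_iff hk B α i h1).mp h4⟩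
  · rintro ⟨⟨h1, h2⟩, h3⟩
    exact ⟨⟨h1, by omega⟩, by omega, (block_iff hk B α i h1).mpr h3⟩

lemma le_D (x : ℕ → ℝ) (N : ℕ) (hN : 1 ≤ N) (a b : ℝ) (h0 : 0 ≤ a) (hab : a < b) (hb : b < 1) :
    |(((Finset.Icc 1 N).filter fun n => x n ∈ Set.Ico a b).card : ℝ) / N - (b - a)|
      ≤ discSeq x N := by
  have hNpos : (0:ℝ) < N := by exact_mod_cast hN
  apply le_csSup
  · refine ⟨1, ?_⟩
    rintro d ⟨a', b', ha', hab', hb', rfl⟩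
    have hcard : (((Finset.Icc 1 N).filter fun n => x n ∈ Set.Ico a' b').card : ℝ) ≤ N := by
      have h1 := Finset.card_filter_le (Finset.Icc 1 N) (fun n => x n ∈ Set.Ico a' b')
      rw [Nat.card_Icc] at h1
      have : ((Finset.Icc 1 N).filter fun n => x n ∈ Set.Ico a' b').card ≤ N := by omega
      exact_mod_cast this
    have hc0 : (0:ℝ) ≤ (((Finset.Icc 1 N).filter fun n => x n ∈ Set.Ico a' b').card : ℝ) := by
      positivity
    have hd1 : (((Finset.Icc 1 N).filter fun n => x n ∈ Set.Ico a' b').card : ℝ) / N ≤ 1 :=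
      (div_le_one hNpos).mpr hcard
    have hd0 : (0:ℝ) ≤ (((Finset.Icc 1 N).filter fun n => x n ∈ Set.Ico a' b').card : ℝ) / N := by
      positivity
    rw [abs_le]
    constructor <;> nlinarith
  · exact ⟨a, b, h0, hab, hb, rfl⟩

lemma abs_count_le (α : ℝ) (N k : ℕ) (hk : 1 ≤ k) (hN : 1 ≤ N) (MB : ℕ) (hMB : MB < 10 ^ k) :
    |(((Finset.Icc 1 N).filter fun n =>
        Int.fract ((10:ℝ) ^ (n - 1) * α) ∈
          Set.Ico ((MB : ℝ) / 10 ^ k) (((MB : ℝ) + 1) / 10 ^ k)).card : ℝ)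
      - N / 10 ^ k| ≤ N * D α N := by
  set x : ℕ → ℝ := fun n => Int.fract ((10:ℝ) ^ (n - 1) * α) with hxdef
  have hDeq : D α N = discSeq x N := rfl
  have hNpos : (0:ℝ) < N := by exact_mod_cast hN
  have h10 : (0:ℝ) < 10 ^ k := by positivity
  set a : ℝ := (MB : ℝ) / 10 ^ k with hadef
  set b : ℝ := ((MB : ℝ) + 1) / 10 ^ k with hbdef
  have ha0 : 0 ≤ a := by positivity
  have hab : a < b := by
    rw [hadef, hbdef, div_lt_div_iff₀ h10 h10]
    nlinarith
  have hMB1' : (MB : ℝ) + 1 ≤ 10 ^ k := by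
    have : (MB + 1 : ℕ) ≤ 10 ^ k := hMB
    exact_mod_cast this
  have hb1 : b ≤ 1 := by
    rw [hbdef, div_le_one h10]; exact hMB1'
  have hba : b - a = 1 / 10 ^ k := by
    rw [hbdef, hadef, div_sub_div_same, add_sub_cancel_left]
  set A : ℕ := ((Finset.Icc 1 N).filter fun n => x n ∈ Set.Ico a b).card with hAdef
  by_cases hb : b < 1
  · have hle := le_D x N hN a b ha0 hab hb
    rw [show ((A:ℝ) - (N:ℝ)/10^k) = N * ((A:ℝ)/N - (b - a)) by
      rw [hba]; field_simp]
    rw [abs_mul, abs_of_pos hNpos, hDeq]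
    exact mul_le_mul_of_nonneg_left hle hNpos.le
  · have hbeq : b = 1 := le_antisymm hb1 (not_lt.mp hb)
    have hMB1 : (MB : ℝ) + 1 = 10 ^ k := by
      rw [hbdef, div_eq_one_iff_eq (ne_of_gt h10)] at hbeq
      exact hbeq
    have hMBpos : 0 < MB := by
      have hnat : MB + 1 = 10 ^ k := by exact_mod_cast hMB1
      have : (10:ℕ) ^ 1 ≤ 10 ^ k := Nat.pow_le_pow_right (by norm_num) hk
      simp at this; omega
    have ha1 : a < 1 := by
      rw [hadef, div_lt_one h10]; exact_mod_cast hMB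
    have ha0' : (0:ℝ) < a := by
      rw [hadef]
      apply div_pos _ h10
      exact_mod_cast hMBpos
    have hle := le_D x N hN 0 a (le_refl 0) ha0' ha1
    rw [sub_zero] at hle
    set A0 : ℕ := ((Finset.Icc 1 N).filter fun n => x n ∈ Set.Ico 0 a).card with hA0def
    have hcompl : ∀ n ∈ Finset.Icc 1 N, (x n ∈ Set.Ico a b ↔ ¬ (x n ∈ Set.Ico (0:ℝ) a)) := by
      intro n _
      have h0n : (0:ℝ) ≤ x n := Int.fract_nonneg _
      have h1n : x n < 1 := Int.fract_lt_one _
      simp only [Set.mem_Ico, hbeq]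
      constructor
      · rintro ⟨h1, _⟩ hcon
        exact absurd h1 (not_le.mpr hcon.2)
      · intro hnot
        refine ⟨?_, h1n⟩
        by_contra hcon
        exact hnot ⟨h0n, lt_of_not_ge hcon⟩
    have hcards : A + A0 = N := by
      have hfilt : (Finset.Icc 1 N).filter (fun n => x n ∈ Set.Ico a b)
          = (Finset.Icc 1 N).filter (fun n => ¬ (x n ∈ Set.Ico (0:ℝ) a)) :=
        Finset.filter_congr hcompl
      have hkey := Finset.card_filter_add_card_filter_not
        (s := Finset.Icc 1 N) (p := fun n => x n ∈ Set.Ico (0:ℝ) a)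
      rw [Nat.card_Icc] at hkey
      rw [hAdef, hA0def, hfilt]
      omega
    have hA0le : (A0 : ℝ) ≤ N := by
      have : A0 ≤ N := by omega
      exact_mod_cast this
    have hAr : (A : ℝ) = N - A0 := by
      have : (A : ℝ) + A0 = N := by exact_mod_cast hcards
      linarith
    have h1a : 1 - a = 1 / 10 ^ k := by
      rw [hadef]
      field_simp
      linarith
    have main : (A:ℝ) - (N:ℝ)/10^k = -(N * ((A0:ℝ)/N - a)) := by
      rw [hAr, show (N:ℝ)/10^k = N * (1 - a) by rw [h1a]; ring]
      field_simp
      ring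
    rw [main, abs_neg, abs_mul, abs_of_pos hNpos, hDeq]
    exact mul_le_mul_of_nonneg_left hle hNpos.le

/-- If two digit blocks `B₁, B₂` of equal length `k` satisfy
`|occ(α, B₁, N) − occ(α, B₂, N)| > C·N / log N` for infinitely many `N`, then
`D(α, N) > (C/3) / log N` for infinitely many `N`. -/
theorem discrepancy_lower_of_occ_diff (α : ℝ) (hα : α ∈ Set.Ico (0 : ℝ) 1)
    (k : ℕ) (hk : 1 ≤ k) (B₁ B₂ : Fin k → Fin 10) (C : ℝ) (hC : 0 < C)
    (h : ∀ m : ℕ, ∃ N : ℕ, m ≤ N ∧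
      |(occ α B₁ N : ℝ) - (occ α B₂ N : ℝ)| > C * N / Real.log N) :
    ∀ m : ℕ, ∃ N : ℕ, m ≤ N ∧ D α N > (C / 3) / Real.log N := by
  intro m
  obtain ⟨N, hNm, hocc⟩ := h (max (max (m + k) (2 * k)) 9)
  have hNmk : m + k ≤ N := le_trans (le_max_of_le_left (le_max_left _ _)) hNm
  have hN2k : 2 * k ≤ N := le_trans (le_max_of_le_left (le_max_right _ _)) hNm
  have hN9 : 9 ≤ N := le_trans (le_max_right _ _) hNm
  set M : ℕ := N + 1 - k with hMdef
  have hM1 : 1 ≤ M := by omega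
  have hmM : m ≤ M := by omega
  have hMN : M ≤ N := by omega
  have hN2M : N + 2 ≤ 2 * M := by omega
  have hM5 : 5 ≤ M := by omega
  refine ⟨M, hmM, ?_⟩
  -- counting estimates
  have h1 := abs_count_le α M k hk hM1 (bVal B₁) (bVal_lt B₁)
  have h2 := abs_count_le α M k hk hM1 (bVal B₂) (bVal_lt B₂)
  have e1 : (occ α B₁ N : ℝ) = (((Finset.Icc 1 M).filter fun n =>
      Int.fract ((10:ℝ) ^ (n - 1) * α) ∈
        Set.Ico ((bVal B₁ : ℝ) / 10 ^ k) (((bVal B₁ : ℝ) + 1) / 10 ^ k)).card : ℝ) := by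
    rw [hMdef]; exact_mod_cast congrArg (Nat.cast (R := ℝ)) (occ_eq hk B₁ α N)
  have e2 : (occ α B₂ N : ℝ) = (((Finset.Icc 1 M).filter fun n =>
      Int.fract ((10:ℝ) ^ (n - 1) * α) ∈
        Set.Ico ((bVal B₂ : ℝ) / 10 ^ k) (((bVal B₂ : ℝ) + 1) / 10 ^ k)).card : ℝ) := by
    rw [hMdef]; exact_mod_cast congrArg (Nat.cast (R := ℝ)) (occ_eq hk B₂ α N)
  rw [← e1] at h1
  rw [← e2] at h2
  have htri : |(occ α B₁ N : ℝ) - (occ α B₂ N : ℝ)| ≤ 2 * M * D α M := by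
    have := abs_sub_le (occ α B₁ N : ℝ) ((M : ℝ) / 10 ^ k) (occ α B₂ N : ℝ)
    rw [abs_sub_comm ((M : ℝ) / 10 ^ k) ((occ α B₂ N : ℝ))] at this
    linarith
  -- numeric part
  have hMposR : (0:ℝ) < M := by exact_mod_cast hM1
  have hNR : (9:ℝ) ≤ N := by exact_mod_cast hN9
  have hlogN : 0 < Real.log N := Real.log_pos (by linarith)
  have hlogM : 0 < Real.log M := Real.log_pos (by
    have : (5:ℝ) ≤ M := by exact_mod_cast hM5
    linarith)
  have hMNR : (M:ℝ) ≤ N := by exact_mod_cast hMN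
  have hD : C * N / Real.log N < 2 * M * D α M := lt_of_lt_of_le hocc htri
  have hD' : C * N < 2 * M * D α M * Real.log N := (div_lt_iff₀ hlogN).mp hD
  have hC2 : C < 2 * D α M * Real.log N := by nlinarith
  have hDpos : 0 < D α M := by nlinarith
  -- log comparison
  have hM2 : (N:ℝ) + 2 ≤ 2 * M := by exact_mod_cast hN2M
  have hlog1 : Real.log ((N:ℝ) / 2) ≤ Real.log M :=
    Real.log_le_log (by linarith) (by linarith)
  have hlogdiv : Real.log ((N:ℝ) / 2) = Real.log N - Real.log 2 :=
    Real.log_div (by linarith) (by norm_num)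
  have h8 : Real.log 8 ≤ Real.log N := Real.log_le_log (by norm_num) (by linarith)
  have hl8 : Real.log 8 = 3 * Real.log 2 := by
    rw [show (8:ℝ) = 2 ^ (3:ℕ) by norm_num, Real.log_pow]; push_cast; ring
  have h32 : 2 * Real.log N ≤ 3 * Real.log M := by
    rw [hlogdiv] at hlog1
    linarith
  rw [gt_iff_lt, div_lt_iff₀ hlogM]
  nlinarith
end

section
/- For every digit block B of length k ≥ 2 and every ℓ ≥ k, the number of occurrences of B in the string s_ℓ that straddle a boundary between two consecutive ℓ-digit terms satisfies occ_o(B, s_ℓ) ≤ (k−1)·10^{ℓ−k}. -/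
open scoped Classical

lemma mod_pow_eq_of_digits_eq (a b j : ℕ)
    (h : ∀ t < j, a / 10 ^ t % 10 = b / 10 ^ t % 10) : a % 10 ^ j = b % 10 ^ j := by
  induction j with
  | zero => simp [Nat.mod_one]
  | succ n ih =>
    have h1 : a % 10 ^ (n + 1) = a % 10 ^ n + 10 ^ n * (a / 10 ^ n % 10) := by
      rw [pow_succ, Nat.mod_mul]
    have h2 : b % 10 ^ (n + 1) = b % 10 ^ n + 10 ^ n * (b / 10 ^ n % 10) := by
      rw [pow_succ, Nat.mod_mul]
    rw [h1, h2, ih (fun t ht => h t (by omega)), h n (by omega)]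

lemma occOSeg_inj (k ℓ j : ℕ) (B : Fin k → Fin 10) (hℓ : k ≤ ℓ)
    (hj1 : 1 ≤ j) (hjk : j < k) (y z : ℕ)
    (hyhigh : y < 10 ^ ℓ - 1) (hzhigh : z < 10 ^ ℓ - 1)
    (hpA : ∀ i : Fin k, (i : ℕ) < j → y / 10 ^ (j - 1 - (i : ℕ)) % 10 = (B i : ℕ))
    (hpB : ∀ i : Fin k, j ≤ (i : ℕ) →
      (y + 1) / 10 ^ (ℓ - 1 - ((i : ℕ) - j)) % 10 = (B i : ℕ))
    (hqA : ∀ i : Fin k, (i : ℕ) < j → z / 10 ^ (j - 1 - (i : ℕ)) % 10 = (B i : ℕ))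
    (hqB : ∀ i : Fin k, j ≤ (i : ℕ) →
      (z + 1) / 10 ^ (ℓ - 1 - ((i : ℕ) - j)) % 10 = (B i : ℕ))
    (hmid : y / 10 ^ j % 10 ^ (ℓ - k) = z / 10 ^ j % 10 ^ (ℓ - k)) : y = z := by
  -- low digits agree
  have hlow : y % 10 ^ j = z % 10 ^ j := by
    apply mod_pow_eq_of_digits_eq
    intro t ht
    have hik : j - 1 - t < k := by omega
    have hlt : ((⟨j - 1 - t, hik⟩ : Fin k) : ℕ) < j := by simp; omega
    have e1 := hpA ⟨j - 1 - t, hik⟩ hlt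
    have e2 := hqA ⟨j - 1 - t, hik⟩ hlt
    simp only at e1 e2
    have harith : j - 1 - (j - 1 - t) = t := by omega
    rw [harith] at e1 e2
    rw [e1, e2]
  set m := ℓ - (k - j) with hm
  have hQdig : ∀ w : ℕ, (∀ i : Fin k, j ≤ (i : ℕ) →
      (w + 1) / 10 ^ (ℓ - 1 - ((i : ℕ) - j)) % 10 = (B i : ℕ)) →
      ∀ t, ∀ ht : t < k - j,
      (w + 1) / 10 ^ m / 10 ^ t % 10 = (B ⟨k - 1 - t, by omega⟩ : ℕ) := by
    intro w hw t ht
    have hik : k - 1 - t < k := by omega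
    have hji : j ≤ ((⟨k - 1 - t, hik⟩ : Fin k) : ℕ) := by simp; omega
    have e := hw ⟨k - 1 - t, hik⟩ hji
    simp only at e
    have harith : ℓ - 1 - (k - 1 - t - j) = m + t := by omega
    rw [harith, pow_add, ← Nat.div_div_eq_div_mul] at e
    exact e
  have hQbound : ∀ w : ℕ, w < 10 ^ ℓ - 1 → (w + 1) / 10 ^ m < 10 ^ (k - j) := by
    intro w hw
    apply Nat.div_lt_of_lt_mul
    rw [← pow_add]
    have : m + (k - j) = ℓ := by omega
    rw [this]
    omega
  have hQeq : (y + 1) / 10 ^ m = (z + 1) / 10 ^ m := by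
    have hb1 := hQbound y hyhigh
    have hb2 := hQbound z hzhigh
    have := mod_pow_eq_of_digits_eq ((y + 1) / 10 ^ m) ((z + 1) / 10 ^ m) (k - j)
      (fun t ht => by rw [hQdig y hpB t ht, hQdig z hqB t ht])
    rwa [Nat.mod_eq_of_lt hb1, Nat.mod_eq_of_lt hb2] at this
  have hmod : y % 10 ^ m = z % 10 ^ m := by
    have hsplit : (10 : ℕ) ^ m = 10 ^ j * 10 ^ (ℓ - k) := by
      rw [← pow_add]; congr 1; omega
    rw [hsplit, Nat.mod_mul, Nat.mod_mul, hlow, hmid]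
  have h1 : (y + 1) % 10 ^ m = (z + 1) % 10 ^ m := by
    conv_lhs => rw [Nat.add_mod, hmod, ← Nat.add_mod]
  have e1 := Nat.div_add_mod (y + 1) (10 ^ m)
  have e2 := Nat.div_add_mod (z + 1) (10 ^ m)
  rw [← hQeq, ← h1] at e2
  omega

set_option maxHeartbeats 1000000 in
/-- For every digit block `B` of length `k ≥ 2` and every `ℓ ≥ k`, the number of
occurrences of `B` in `s_ℓ` straddling a boundary between two consecutive
`ℓ`-digit terms satisfies `occ_o(B, s_ℓ) ≤ (k−1)·10^{ℓ−k}`. -/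
theorem occOSeg_upper (k ℓ : ℕ) (hk : 2 ≤ k) (B : Fin k → Fin 10) (hℓ : k ≤ ℓ) :
    occOSeg B ℓ ≤ (k - 1) * 10 ^ (ℓ - k) := by
  have hcard : (Finset.Ico 1 k ×ˢ Finset.range (10 ^ (ℓ - k))).card
      = (k - 1) * 10 ^ (ℓ - k) := by
    simp [Nat.card_Ico]
  rw [occOSeg, ← hcard]
  apply Finset.card_le_card_of_injOn (fun p => (p.2, p.1 / 10 ^ p.2 % 10 ^ (ℓ - k)))
  · intro p hp
    simp only [Finset.mem_coe, Finset.mem_filter, Finset.mem_product, Finset.mem_Ico] at hp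
    simp only [Finset.mem_coe, Finset.mem_product, Finset.mem_Ico, Finset.mem_range]
    exact ⟨hp.1.2, Nat.mod_lt _ (by positivity)⟩
  · intro p hp q hq heq
    simp only [Finset.coe_filter, Set.mem_setOf_eq, Finset.mem_product,
      Finset.mem_Ico] at hp hq
    obtain ⟨⟨⟨hylow, hyhigh⟩, hj1, hjk⟩, hpA, hpB⟩ := hp
    obtain ⟨⟨⟨hzlow, hzhigh⟩, hj1', hjk'⟩, hqA, hqB⟩ := hq
    simp only [Prod.mk.injEq] at heq
    obtain ⟨hjj, hmid⟩ := heq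
    rw [← hjj] at hmid hqA hqB hj1' hjk'
    exact Prod.ext
      (occOSeg_inj k ℓ p.2 B hℓ hj1 hjk p.1 q.1 hyhigh hzhigh hpA hpB hqA hqB hmid) hjj
end

section
/- Let B₁ and B₂ be digit blocks of the same length k ≥ 1 such that the first digit of B₁ is nonzero and the first digit of B₂ is zero. Then for every ℓ ≥ k, occ_no(B₁, s_ℓ) − occ_no(B₂, s_ℓ) = 10^{ℓ−k}. -/
open scoped Classical

private lemma digitsum_lt (k : ℕ) (d : ℕ → ℕ) (hd : ∀ t, t < k → d t < 10) :
    ∑ t ∈ Finset.range k, d t * 10 ^ t < 10 ^ k := by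
  induction k generalizing d with
  | zero => simp
  | succ n ih =>
    rw [Finset.sum_range_succ']
    have h1 : ∑ t ∈ Finset.range n, d (t + 1) * 10 ^ (t + 1)
        = 10 * ∑ t ∈ Finset.range n, d (t + 1) * 10 ^ t := by
      rw [Finset.mul_sum]; exact Finset.sum_congr rfl fun t _ => by ring
    have h2 := ih (fun t => d (t + 1)) (fun t ht => hd (t + 1) (by omega))
    have h3 := hd 0 (by omega)
    rw [h1, pow_succ]
    simp only [pow_zero, mul_one]
    omega

private lemma digitsum_digit (k : ℕ) (d : ℕ → ℕ) (hd : ∀ t, t < k → d t < 10)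
    (s : ℕ) (hs : s < k) :
    (∑ t ∈ Finset.range k, d t * 10 ^ t) / 10 ^ s % 10 = d s := by
  induction k generalizing d s with
  | zero => omega
  | succ n ih =>
    rw [Finset.sum_range_succ']
    have h1 : (∑ t ∈ Finset.range n, d (t + 1) * 10 ^ (t + 1)) + d 0 * 10 ^ 0
        = d 0 + 10 * ∑ t ∈ Finset.range n, d (t + 1) * 10 ^ t := by
      rw [Finset.mul_sum]
      have : ∑ t ∈ Finset.range n, d (t + 1) * 10 ^ (t + 1)
          = ∑ t ∈ Finset.range n, 10 * (d (t + 1) * 10 ^ t) :=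
        Finset.sum_congr rfl fun t _ => by ring
      rw [this]; simp [add_comm]
    rw [h1]
    cases s with
    | zero =>
      have h3 := hd 0 (by omega)
      simp only [pow_zero, Nat.div_one]
      omega
    | succ s' =>
      have h4 : (d 0 + 10 * ∑ t ∈ Finset.range n, d (t + 1) * 10 ^ t) / 10 ^ (s' + 1)
          = (∑ t ∈ Finset.range n, d (t + 1) * 10 ^ t) / 10 ^ s' := by
        rw [pow_succ', ← Nat.div_div_eq_div_mul, Nat.add_mul_div_left _ _ (by norm_num),
          Nat.div_eq_of_lt (hd 0 (by omega))]
        simp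
      rw [h4]
      exact ih (fun t => d (t + 1)) (fun t ht => hd (t + 1) (by omega)) s' (by omega)

private lemma eq_of_digits (k : ℕ) : ∀ n n' : ℕ, n < 10 ^ k → n' < 10 ^ k →
    (∀ s, s < k → n / 10 ^ s % 10 = n' / 10 ^ s % 10) → n = n' := by
  induction k with
  | zero => intro n n' h h' _; simp at h h'; omega
  | succ m ih =>
    intro n n' h h' hdig
    have h0 := hdig 0 (by omega)
    simp only [pow_zero, Nat.div_one] at h0
    have hq : n / 10 = n' / 10 := by
      apply ih
      · rw [Nat.div_lt_iff_lt_mul (by norm_num)]; rw [pow_succ] at h; exact h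
      · rw [Nat.div_lt_iff_lt_mul (by norm_num)]; rw [pow_succ] at h'; exact h'
      · intro s hs
        have := hdig (s + 1) (by omega)
        rwa [pow_succ', ← Nat.div_div_eq_div_mul, ← Nat.div_div_eq_div_mul] at this
    omega

private lemma mod_pow_digit (y e k s : ℕ) (hs : s < k) :
    (y / 10 ^ e % 10 ^ k) / 10 ^ s % 10 = y / 10 ^ (e + s) % 10 := by
  have h1 : (10 : ℕ) ^ k = 10 ^ s * 10 ^ (k - s) := by rw [← pow_add]; congr 1; omega
  rw [h1, Nat.mod_mul_right_div_self,
    Nat.mod_mod_of_dvd _ (dvd_pow_self 10 (by omega : k - s ≠ 0)),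
    Nat.div_div_eq_div_mul, ← pow_add]

private lemma decomp (y E K : ℕ) :
    y = y / (E * K) * (E * K) + (y / E % K) * E + y % E := by
  calc y = E * (y / E) + y % E := (Nat.div_add_mod y E).symm
  _ = E * (K * (y / E / K) + y / E % K) + y % E := by
      conv_lhs => rw [← Nat.div_add_mod (y / E) K]
  _ = y / (E * K) * (E * K) + (y / E % K) * E + y % E := by
      rw [Nat.div_div_eq_div_mul]; ring
private def mval {k : ℕ} (B : Fin k → Fin 10) : ℕ :=
  ∑ i : Fin k, (B i : ℕ) * 10 ^ (k - 1 - (i : ℕ))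

private def dOf {k : ℕ} (B : Fin k → Fin 10) : ℕ → ℕ :=
  fun t => if h : t < k then (B ⟨k - 1 - t, by omega⟩ : ℕ) else 0

private lemma dOf_lt {k : ℕ} (B : Fin k → Fin 10) : ∀ t, t < k → dOf B t < 10 := by
  intro t ht
  simp only [dOf, dif_pos ht]
  exact (B _).is_lt

private lemma mval_eq {k : ℕ} (B : Fin k → Fin 10) :
    mval B = ∑ t ∈ Finset.range k, dOf B t * 10 ^ t := by
  rw [← Finset.sum_range_reflect (fun t => dOf B t * 10 ^ t) k, mval,
    ← Fin.sum_univ_eq_sum_range (fun t => dOf B (k - 1 - t) * 10 ^ (k - 1 - t)) k]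
  apply Finset.sum_congr rfl
  intro i _
  have hi : (i : ℕ) < k := i.is_lt
  simp only [dOf, dif_pos (show k - 1 - (i : ℕ) < k by omega)]
  have h1 : k - 1 - (k - 1 - (i : ℕ)) = (i : ℕ) := by omega
  simp only [h1, Fin.eta]

private lemma mval_lt {k : ℕ} (B : Fin k → Fin 10) : mval B < 10 ^ k := by
  rw [mval_eq]; exact digitsum_lt k _ (dOf_lt B)

private lemma mval_digit {k : ℕ} (B : Fin k → Fin 10) (s : ℕ) (hs : s < k) :
    mval B / 10 ^ s % 10 = (B ⟨k - 1 - s, by omega⟩ : ℕ) := by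
  rw [mval_eq, digitsum_digit k _ (dOf_lt B) s hs, dOf, dif_pos hs]

private lemma mval_ge {k : ℕ} (hk : 0 < k) (B : Fin k → Fin 10)
    (h : (B ⟨0, hk⟩ : ℕ) ≠ 0) : 10 ^ (k - 1) ≤ mval B := by
  have h1 : (B ⟨0, hk⟩ : ℕ) * 10 ^ (k - 1 - ((⟨0, hk⟩ : Fin k) : ℕ)) ≤ mval B :=
    Finset.single_le_sum (f := fun i : Fin k => (B i : ℕ) * 10 ^ (k - 1 - (i : ℕ)))
      (fun i _ => Nat.zero_le _) (Finset.mem_univ (⟨0, hk⟩ : Fin k))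
  simp only [Fin.val_mk, Nat.sub_zero] at h1
  calc 10 ^ (k - 1) = 1 * 10 ^ (k - 1) := (one_mul _).symm
  _ ≤ (B ⟨0, hk⟩ : ℕ) * 10 ^ (k - 1) := Nat.mul_le_mul_right _ (by omega)
  _ ≤ mval B := h1

private lemma mval_small {k : ℕ} (hk : 0 < k) (B : Fin k → Fin 10)
    (h : (B ⟨0, hk⟩ : ℕ) = 0) : mval B < 10 ^ (k - 1) := by
  rw [mval_eq]
  obtain ⟨m, rfl⟩ : ∃ m, k = m + 1 := ⟨k - 1, by omega⟩
  rw [Finset.sum_range_succ]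
  have hd : dOf B m = 0 := by
    have e : (⟨m + 1 - 1 - m, by omega⟩ : Fin (m + 1)) = ⟨0, hk⟩ := by
      apply Fin.ext; simp
    simp only [dOf, dif_pos (show m < m + 1 by omega), e, h]
  rw [hd]
  simpa using digitsum_lt m (dOf B) (fun t ht => dOf_lt B t (by omega))
private lemma cond_iff {k : ℕ} (hk : 0 < k) (B : Fin k → Fin 10) (ℓ j y : ℕ)
    (hj1 : 1 ≤ j) (hjk : j + k ≤ ℓ + 1) :
    (∀ i : Fin k, y / 10 ^ (ℓ - (j + (i : ℕ))) % 10 = (B i : ℕ)) ↔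
      y / 10 ^ (ℓ + 1 - j - k) % 10 ^ k = mval B := by
  constructor
  · intro h
    apply eq_of_digits k _ _ (Nat.mod_lt _ (by positivity)) (mval_lt B)
    intro s hs
    rw [mod_pow_digit y _ k s hs, mval_digit B s hs]
    have hi : k - 1 - s < k := by omega
    have h2 := h ⟨k - 1 - s, hi⟩
    simp only [Fin.val_mk] at h2
    have e3 : ℓ - (j + (k - 1 - s)) = ℓ + 1 - j - k + s := by omega
    rw [e3] at h2
    exact h2
  · intro h i
    have hs : k - 1 - (i : ℕ) < k := by omega
    have h2 := mod_pow_digit y (ℓ + 1 - j - k) k (k - 1 - (i : ℕ)) hs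
    rw [h, mval_digit B _ hs] at h2
    have e : (⟨k - 1 - (k - 1 - (i : ℕ)), by omega⟩ : Fin k) = i := by
      apply Fin.ext; simp only [Fin.val_mk]; omega
    rw [e] at h2
    have e3 : ℓ - (j + (i : ℕ)) = ℓ + 1 - j - k + (k - 1 - (i : ℕ)) := by omega
    rw [e3, ← h2]

/-- Replace the digit block of width `k` at position `j` by value `m`. -/
private def swapAt (k ℓ j m y : ℕ) : ℕ :=
  y / 10 ^ (ℓ + 1 - j) * 10 ^ (ℓ + 1 - j) + m * 10 ^ (ℓ + 1 - j - k)
    + y % 10 ^ (ℓ + 1 - j - k)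

private lemma swap_props (k ℓ j m m' y : ℕ) (hk : 0 < k) (hℓ : k ≤ ℓ)
    (hj : 2 ≤ j) (hj2 : j + k ≤ ℓ + 1) (hy1 : 10 ^ (ℓ - 1) ≤ y) (hy2 : y < 10 ^ ℓ)
    (hm : m < 10 ^ k) (hm' : m' < 10 ^ k)
    (hcond : y / 10 ^ (ℓ + 1 - j - k) % 10 ^ k = m) :
    10 ^ (ℓ - 1) ≤ swapAt k ℓ j m' y ∧ swapAt k ℓ j m' y < 10 ^ ℓ ∧
      swapAt k ℓ j m' y / 10 ^ (ℓ + 1 - j - k) % 10 ^ k = m' ∧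
      swapAt k ℓ j m (swapAt k ℓ j m' y) = y := by
  set E := 10 ^ (ℓ + 1 - j - k) with hE
  set P := 10 ^ (ℓ + 1 - j) with hP
  have hEpos : 0 < E := by positivity
  have hPpos : 0 < P := by positivity
  have hEP : P = E * 10 ^ k := by rw [hE, hP, ← pow_add]; congr 1; omega
  set q := y / P with hq
  set r := y % E with hr
  have hrE : r < E := Nat.mod_lt _ hEpos
  have hy' : swapAt k ℓ j m' y = q * P + m' * E + r := rfl
  have hform : q * P + m' * E + r = r + E * (m' + 10 ^ k * q) := by
    rw [hEP]; ring
  have hdiv : (q * P + m' * E + r) / E = m' + 10 ^ k * q := by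
    rw [hform, Nat.add_mul_div_left _ _ hEpos, Nat.div_eq_of_lt hrE, zero_add]
  have hmodE : (q * P + m' * E + r) % E = r := by
    rw [hform, Nat.add_mul_mod_self_left, Nat.mod_eq_of_lt hrE]
  have hcond' : (q * P + m' * E + r) / E % 10 ^ k = m' := by
    rw [hdiv, Nat.add_mul_mod_self_left, Nat.mod_eq_of_lt hm']
  have hlow : m' * E + r < P := by
    calc m' * E + r < m' * E + E := by omega
    _ = (m' + 1) * E := by ring
    _ ≤ 10 ^ k * E := Nat.mul_le_mul_right _ (by omega)
    _ = P := by rw [hEP]; ring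
  have hdivP : (q * P + m' * E + r) / P = q := by
    have : q * P + m' * E + r = (m' * E + r) + P * q := by ring
    rw [this, Nat.add_mul_div_left _ _ hPpos, Nat.div_eq_of_lt hlow, zero_add]
  have hql : 10 ^ (j - 2) ≤ q := by
    rw [hq, Nat.le_div_iff_mul_le hPpos, hP, ← pow_add]
    calc 10 ^ (j - 2 + (ℓ + 1 - j)) = 10 ^ (ℓ - 1) := by congr 1; omega
    _ ≤ y := hy1
  have hqu : q < 10 ^ (j - 1) := by
    rw [hq, Nat.div_lt_iff_lt_mul hPpos, hP, ← pow_add]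
    calc y < 10 ^ ℓ := hy2
    _ = 10 ^ (j - 1 + (ℓ + 1 - j)) := by congr 1; omega
  have hy'1 : 10 ^ (ℓ - 1) ≤ q * P + m' * E + r := by
    calc 10 ^ (ℓ - 1) = 10 ^ (j - 2) * P := by rw [hP, ← pow_add]; congr 1; omega
    _ ≤ q * P := Nat.mul_le_mul_right _ hql
    _ ≤ q * P + m' * E + r := by omega
  have hy'2 : q * P + m' * E + r < 10 ^ ℓ := by
    calc q * P + m' * E + r < q * P + P := by omega
    _ = (q + 1) * P := by ring
    _ ≤ 10 ^ (j - 1) * P := Nat.mul_le_mul_right _ (by omega)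
    _ = 10 ^ ℓ := by rw [hP, ← pow_add]; congr 1; omega
  have hback : swapAt k ℓ j m (swapAt k ℓ j m' y) = y := by
    rw [hy']
    show (q * P + m' * E + r) / P * P + m * E + (q * P + m' * E + r) % E = y
    rw [hdivP, hmodE]
    have hd := decomp y E (10 ^ k)
    rw [← hEP, ← hq, ← hr, hcond] at hd
    omega
  exact ⟨hy'1, hy'2, hcond', hback⟩
/-- If `B₁` has nonzero first digit and `B₂` has first digit zero (both of length
`k ≥ 1`), then for every `ℓ ≥ k`, `occ_no(B₁, s_ℓ) − occ_no(B₂, s_ℓ) = 10^{ℓ−k}`. -/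
theorem occNoSeg_diff (k ℓ : ℕ) (hk : 0 < k) (B₁ B₂ : Fin k → Fin 10)
    (h₁ : (B₁ ⟨0, hk⟩ : ℕ) ≠ 0) (h₂ : (B₂ ⟨0, hk⟩ : ℕ) = 0) (hℓ : k ≤ ℓ) :
    (occNoSeg B₁ ℓ : ℤ) - (occNoSeg B₂ ℓ : ℤ) = 10 ^ (ℓ - k) := by
  classical
  set D : ℕ := 10 ^ (ℓ - k) with hD
  have hDpos : 0 < D := by positivity
  set P : Finset (ℕ × ℕ) := Finset.Ico (10 ^ (ℓ - 1)) (10 ^ ℓ) ×ˢ Finset.Icc 1 (ℓ - k + 1)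
    with hPdef
  have hmem : ∀ p : ℕ × ℕ, p ∈ P ↔
      (10 ^ (ℓ - 1) ≤ p.1 ∧ p.1 < 10 ^ ℓ ∧ 1 ≤ p.2 ∧ p.2 ≤ ℓ - k + 1) := by
    intro p
    simp [hPdef, Finset.mem_product, Finset.mem_Ico, Finset.mem_Icc, and_assoc]
  set S : (Fin k → Fin 10) → Finset (ℕ × ℕ) :=
    fun B => P.filter fun p => p.1 / 10 ^ (ℓ + 1 - p.2 - k) % 10 ^ k = mval B with hS
  have key : ∀ B : Fin k → Fin 10, occNoSeg B ℓ = (S B).card := by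
    intro B
    rw [occNoSeg, hS]
    congr 1
    apply Finset.filter_congr
    intro p hp
    rw [hmem] at hp
    exact cond_iff hk B ℓ p.2 p.1 hp.2.2.1 (by omega)
  have hsplit : ∀ B : Fin k → Fin 10,
      ((S B).filter fun p => p.2 = 1).card + ((S B).filter fun p => ¬ p.2 = 1).card
        = (S B).card :=
    fun B => Finset.card_filter_add_card_filter_not _
  -- the parts with j ≥ 2 have equal cardinality
  have hA : ((S B₁).filter fun p => ¬ p.2 = 1).card
      = ((S B₂).filter fun p => ¬ p.2 = 1).card := by
    refine Finset.card_bij' (fun p _ => (swapAt k ℓ p.2 (mval B₂) p.1, p.2))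
      (fun p _ => (swapAt k ℓ p.2 (mval B₁) p.1, p.2)) ?_ ?_ ?_ ?_
    · rintro ⟨y, j⟩ hp
      simp only [hS, Finset.mem_filter, hmem] at hp ⊢
      obtain ⟨⟨⟨hp1, hp2, hp3, hp4⟩, hc⟩, hne⟩ := hp
      obtain ⟨g1, g2, g3, -⟩ := swap_props k ℓ j (mval B₁) (mval B₂) y hk hℓ
        (by omega) (by omega) hp1 hp2 (mval_lt B₁) (mval_lt B₂) hc
      exact ⟨⟨⟨g1, g2, hp3, hp4⟩, g3⟩, hne⟩
    · rintro ⟨y, j⟩ hp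
      simp only [hS, Finset.mem_filter, hmem] at hp ⊢
      obtain ⟨⟨⟨hp1, hp2, hp3, hp4⟩, hc⟩, hne⟩ := hp
      obtain ⟨g1, g2, g3, -⟩ := swap_props k ℓ j (mval B₂) (mval B₁) y hk hℓ
        (by omega) (by omega) hp1 hp2 (mval_lt B₂) (mval_lt B₁) hc
      exact ⟨⟨⟨g1, g2, hp3, hp4⟩, g3⟩, hne⟩
    · rintro ⟨y, j⟩ hp
      simp only [hS, Finset.mem_filter, hmem] at hp
      obtain ⟨⟨⟨hp1, hp2, hp3, hp4⟩, hc⟩, hne⟩ := hp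
      obtain ⟨-, -, -, g4⟩ := swap_props k ℓ j (mval B₁) (mval B₂) y hk hℓ
        (by omega) (by omega) hp1 hp2 (mval_lt B₁) (mval_lt B₂) hc
      simp only [Prod.mk.injEq]
      exact ⟨g4, trivial⟩
    · rintro ⟨y, j⟩ hp
      simp only [hS, Finset.mem_filter, hmem] at hp
      obtain ⟨⟨⟨hp1, hp2, hp3, hp4⟩, hc⟩, hne⟩ := hp
      obtain ⟨-, -, -, g4⟩ := swap_props k ℓ j (mval B₂) (mval B₁) y hk hℓ
        (by omega) (by omega) hp1 hp2 (mval_lt B₂) (mval_lt B₁) hc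
      simp only [Prod.mk.injEq]
      exact ⟨g4, trivial⟩
  -- the j = 1 part for B₁ has cardinality D
  have hB : ((S B₁).filter fun p => p.2 = 1).card = D := by
    rw [← Finset.card_range D]
    refine Finset.card_bij' (fun p _ => p.1 % D)
      (fun r _ => (mval B₁ * D + r, 1)) ?_ ?_ ?_ ?_
    · intro p hp
      exact Finset.mem_range.mpr (Nat.mod_lt _ hDpos)
    · intro r hr
      have hrD : r < D := Finset.mem_range.mp hr
      simp only [hS, Finset.mem_filter, hmem]
      have hd1 : (mval B₁ + 1) * D = mval B₁ * D + D := by ring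
      have hup : mval B₁ * D + r < 10 ^ ℓ := by
        calc mval B₁ * D + r < (mval B₁ + 1) * D := by omega
        _ ≤ 10 ^ k * D := Nat.mul_le_mul_right _ (by have := mval_lt B₁; omega)
        _ = 10 ^ ℓ := by rw [hD, ← pow_add]; congr 1; omega
      have hlo : 10 ^ (ℓ - 1) ≤ mval B₁ * D + r := by
        calc 10 ^ (ℓ - 1) = 10 ^ (k - 1) * D := by rw [hD, ← pow_add]; congr 1; omega
        _ ≤ mval B₁ * D := Nat.mul_le_mul_right _ (mval_ge hk B₁ h₁)
        _ ≤ mval B₁ * D + r := by omega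
      have he : ℓ + 1 - 1 - k = ℓ - k := by omega
      have hcond : (mval B₁ * D + r) / 10 ^ (ℓ + 1 - 1 - k) % 10 ^ k = mval B₁ := by
        rw [he, ← hD]
        have h5 : mval B₁ * D + r = r + D * mval B₁ := by ring
        rw [h5, Nat.add_mul_div_left _ _ hDpos, Nat.div_eq_of_lt hrD, zero_add,
          Nat.mod_eq_of_lt (mval_lt B₁)]
      exact ⟨⟨⟨hlo, hup, le_refl 1, by omega⟩, hcond⟩, trivial⟩
    · rintro ⟨y, j⟩ hp
      simp only [hS, Finset.mem_filter, hmem] at hp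
      obtain ⟨⟨⟨hp1, hp2, hp3, hp4⟩, hc⟩, h1⟩ := hp
      subst h1
      have he : ℓ + 1 - 1 - k = ℓ - k := by omega
      rw [he, ← hD] at hc
      have hdiv : y / D < 10 ^ k := by
        rw [Nat.div_lt_iff_lt_mul hDpos]
        calc y < 10 ^ ℓ := hp2
        _ = 10 ^ k * D := by rw [hD, ← pow_add]; congr 1; omega
      rw [Nat.mod_eq_of_lt hdiv] at hc
      simp only [Prod.mk.injEq]
      refine ⟨?_, trivial⟩
      rw [← hc]
      exact Nat.div_add_mod' y D
    · intro r hr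
      show (mval B₁ * D + r) % D = r
      have h6 : mval B₁ * D + r = r + D * mval B₁ := by ring
      rw [h6, Nat.add_mul_mod_self_left, Nat.mod_eq_of_lt (Finset.mem_range.mp hr)]
  -- the j = 1 part for B₂ is empty
  have hC : ((S B₂).filter fun p => p.2 = 1).card = 0 := by
    rw [Finset.card_eq_zero]
    apply Finset.eq_empty_of_forall_notMem
    rintro ⟨y, j⟩ hp
    simp only [hS, Finset.mem_filter, hmem] at hp
    obtain ⟨⟨⟨hp1, hp2, hp3, hp4⟩, hc⟩, h1⟩ := hp
    subst h1
    have he : ℓ + 1 - 1 - k = ℓ - k := by omega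
    rw [he, ← hD] at hc
    have hdiv : y / D < 10 ^ k := by
      rw [Nat.div_lt_iff_lt_mul hDpos]
      calc y < 10 ^ ℓ := hp2
      _ = 10 ^ k * D := by rw [hD, ← pow_add]; congr 1; omega
    rw [Nat.mod_eq_of_lt hdiv] at hc
    have hdam : y / D * D + y % D = y := Nat.div_add_mod' y D
    have hmlt : y % D < D := Nat.mod_lt _ hDpos
    have hd1 : (y / D + 1) * D = y / D * D + D := by ring
    have hlt : y < 10 ^ (ℓ - 1) := by
      calc y < (y / D + 1) * D := by omega
      _ = (mval B₂ + 1) * D := by rw [hc]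
      _ ≤ 10 ^ (k - 1) * D := Nat.mul_le_mul_right _ (mval_small hk B₂ h₂)
      _ = 10 ^ (ℓ - 1) := by rw [hD, ← pow_add]; congr 1; omega
    omega
  have e1 : occNoSeg B₁ ℓ = D + ((S B₂).filter fun p => ¬ p.2 = 1).card := by
    rw [key B₁, ← hsplit B₁, hB, hA]
  have e2 : occNoSeg B₂ ℓ = ((S B₂).filter fun p => ¬ p.2 = 1).card := by
    rw [key B₂, ← hsplit B₂, hC, zero_add]
  rw [e1, e2, hD]
  push_cast
  ring
end
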